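/- arXiv:1705.08674 — 3 statements merged into one kernel-verified Lean document; each statement's English description precedes it below -/
import Mathlib

section
/- For every n ≥ 2, the number of vertices of the Lucas cube Λ_n at distance k from the vertex 0^n equals 2·binom(n−k, k) − binom(n−k−1, k); that is, W_{Λ_n,0^n}(x) = Σ_{k=0}^{⌊n/2⌋} [2·binom(n−k, k) − binom(n−k−1, k)] x^k. -/
def Qcube (n : ℕ) : SimpleGraph (Fin n → Bool) where
  Adj u v := hammingDist u v = 1
  symm := ⟨fun u v h => by rwa [hammingDist_comm]⟩
  loopless := ⟨fun u h => by simp [hammingDist_self] at h⟩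

def daisySet {n : ℕ} (X : Set (Fin n → Bool)) : Set (Fin n → Bool) :=
  {u | ∃ x ∈ X, u ≤ x}

noncomputable def cubeCount {V : Type*} (G : SimpleGraph V) (k : ℕ) : ℕ :=
  Set.ncard {S : Set V | Nonempty (G.induce S ≃g Qcube k)}

noncomputable def distToSet {V : Type*} (G : SimpleGraph V) (u : V) (S : Set V) : ℕ :=
  sInf (G.dist u '' S)

noncomputable def distCubeCount {V : Type*} (G : SimpleGraph V) (u : V) (k d : ℕ) : ℕ :=
  Set.ncard {S : Set V | Nonempty (G.induce S ≃g Qcube k) ∧ distToSet G u S = d}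

noncomputable def wCount {V : Type*} (G : SimpleGraph V) (u : V) (d : ℕ) : ℕ :=
  Set.ncard {v : V | G.dist u v = d}

def interval {V : Type*} (G : SimpleGraph V) (u v : V) : Set V :=
  {w | G.dist u v = G.dist u w + G.dist w v}

def fibSet (n : ℕ) : Set (Fin n → Bool) :=
  {u | ∀ i j : Fin n, (j : ℕ) = (i : ℕ) + 1 → ¬(u i = true ∧ u j = true)}

lemma zero_mem_fibSet (n : ℕ) : (fun _ => false) ∈ fibSet n := by
  intro i j _ h
  simp at h

def lucasSet (n : ℕ) : Set (Fin n → Bool) :=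
  {u | u ∈ fibSet n ∧ ∀ i j : Fin n, (i : ℕ) = 0 → (j : ℕ) = n - 1 → ¬(u i = true ∧ u j = true)}

lemma zero_mem_lucasSet (n : ℕ) : (fun _ => false) ∈ lucasSet n := by
  refine ⟨zero_mem_fibSet n, ?_⟩
  intro i j _ _ h
  simp at h


open Finset

attribute [local instance] Classical.propDecidable

def fcons {m : ℕ} (b : Bool) (v : Fin m → Bool) : Fin (m + 1) → Bool := Fin.cons b v

@[simp] lemma fcons_zero {m : ℕ} (b : Bool) (v : Fin m → Bool) : fcons b v 0 = b := rfl

lemma fcons_succ {m : ℕ} (b : Bool) (v : Fin m → Bool) (i : ℕ) (h : i + 1 < m + 1) :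
    fcons b v ⟨i + 1, h⟩ = v ⟨i, by omega⟩ := by
  unfold fcons
  exact Fin.cons_succ (α := fun _ : Fin (m+1) => Bool) b v ⟨i, Nat.lt_of_succ_lt_succ h⟩

lemma fcons_tail {m : ℕ} (u : Fin (m + 1) → Bool) : fcons (u 0) (Fin.tail u) = u :=
  Fin.cons_self_tail u

lemma fcons_inj {m : ℕ} (b : Bool) : Function.Injective (fcons (m := m) b) := by
  intro v w h
  have := congrArg Fin.tail h
  simpa [fcons, Fin.tail_cons] using this

/-- weight (number of ones) -/
def wt {m : ℕ} (u : Fin m → Bool) : ℕ := ∑ i, if u i then 1 else 0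

/-- Fibonacci condition with ℕ indexing -/
def fibP (m : ℕ) (u : Fin m → Bool) : Prop :=
  ∀ i : ℕ, ∀ h : i + 1 < m, ¬(u ⟨i, by omega⟩ = true ∧ u ⟨i + 1, h⟩ = true)

def lastF (m : ℕ) (u : Fin m → Bool) : Prop :=
  ∀ _h : 0 < m, u ⟨m - 1, by omega⟩ = false

lemma wt_fcons {m : ℕ} (b : Bool) (v : Fin m → Bool) :
    wt (fcons b v) = (if b then 1 else 0) + wt v := by
  unfold wt fcons
  rw [Fin.sum_univ_succ]
  simp

lemma wt_eq_zero_iff {m : ℕ} (u : Fin m → Bool) : wt u = 0 ↔ u = fun _ => false := by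
  constructor
  · intro h
    funext i
    by_contra hi
    have hi' : u i = true := by simpa using hi
    have : (if u i then 1 else 0) ≤ wt u := Finset.single_le_sum (f := fun i => if u i then 1 else 0)
      (by intro j _; positivity) (mem_univ i)
    rw [hi', h] at this
    simp at this
  · rintro rfl; simp [wt]

lemma fibP_fcons {m : ℕ} (b : Bool) (v : Fin m → Bool) :
    fibP (m + 1) (fcons b v) ↔
      fibP m v ∧ ∀ h : 0 < m, ¬(b = true ∧ v ⟨0, h⟩ = true) := by
  constructor
  · intro H
    refine ⟨fun i h => ?_, fun h => ?_⟩
    · have := H (i + 1) (by omega)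
      rwa [fcons_succ, fcons_succ] at this
    · have := H 0 (by omega)
      rwa [show (⟨0, by omega⟩ : Fin (m+1)) = 0 from rfl, fcons_zero, fcons_succ] at this
  · rintro ⟨H1, H2⟩ i h
    match i with
    | 0 =>
      rw [show (⟨0, by omega⟩ : Fin (m+1)) = 0 from rfl, fcons_zero, fcons_succ]
      exact H2 (by omega)
    | (j + 1) =>
      rw [fcons_succ, fcons_succ]
      exact H1 j (by omega)

lemma lastF_fcons_pos {m : ℕ} (b : Bool) (v : Fin (m + 1) → Bool) :
    lastF (m + 2) (fcons b v) ↔ lastF (m + 1) v := by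
  unfold lastF
  constructor
  · intro H _
    have := H (by omega)
    rwa [show (⟨m + 2 - 1, by omega⟩ : Fin (m+2)) = ⟨m + 1, by omega⟩ from rfl,
      fcons_succ] at this
  · intro H _
    rw [show (⟨m + 2 - 1, by omega⟩ : Fin (m+2)) = ⟨m + 1, by omega⟩ from rfl, fcons_succ]
    exact H (by omega)

lemma lastF_fcons_zero (b : Bool) (v : Fin 0 → Bool) :
    lastF 1 (fcons b v) ↔ b = false := by
  unfold lastF
  simp [show (⟨1 - 1, by omega⟩ : Fin 1) = 0 from rfl]

lemma card_cons_split {m : ℕ} (Q : (Fin (m + 1) → Bool) → Prop) [DecidablePred Q]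
    [DecidablePred fun v : Fin m → Bool => Q (fcons false v)]
    [DecidablePred fun v : Fin m → Bool => Q (fcons true v)] :
    (univ.filter Q).card
      = (univ.filter fun v : Fin m → Bool => Q (fcons false v)).card
      + (univ.filter fun v : Fin m → Bool => Q (fcons true v)).card := by
  have hset : univ.filter Q
      = ((univ.filter fun v : Fin m → Bool => Q (fcons false v)).image (fcons false))
        ∪ ((univ.filter fun v : Fin m → Bool => Q (fcons true v)).image (fcons true)) := by
    ext u
    simp only [mem_filter, mem_union, mem_image, mem_univ, true_and]
    constructor
    · intro hQ
      have hu : u = fcons (u 0) (Fin.tail u) := (fcons_tail u).symm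
      cases hb : u 0 with
      | false => exact Or.inl ⟨Fin.tail u, by rw [hu, hb] at hQ ⊢; exact ⟨hQ, rfl⟩⟩
      | true => exact Or.inr ⟨Fin.tail u, by rw [hu, hb] at hQ ⊢; exact ⟨hQ, rfl⟩⟩
    · rintro (⟨v, hv, rfl⟩ | ⟨v, hv, rfl⟩) <;> exact hv
  rw [hset, card_union_of_disjoint, card_image_of_injective _ (fcons_inj false),
    card_image_of_injective _ (fcons_inj true)]
  rw [Finset.disjoint_left]
  rintro u hu hu'
  simp only [mem_image, mem_filter] at hu hu'
  obtain ⟨v, _, rfl⟩ := hu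
  obtain ⟨w, _, hw⟩ := hu'
  have := congrFun hw 0
  simp at this

lemma card_filter_fin_zero (P : (Fin 0 → Bool) → Prop) [DecidablePred P] :
    (univ.filter P).card = if P (fun i => i.elim0) then 1 else 0 := by
  have huniv : (univ : Finset (Fin 0 → Bool)) = {fun i => i.elim0} := by
    ext u
    simp only [mem_univ, mem_singleton, true_iff]
    funext i
    exact i.elim0
  rw [huniv, Finset.filter_singleton]
  split <;> simp

lemma fibP_zero_aux {m : ℕ} : fibP m (fun _ => false) := by
  intro i h hc
  simp at hc

lemma lastF_zero_aux {m : ℕ} : lastF m (fun _ => false) := fun _ => rfl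

noncomputable def Fc (m k : ℕ) : ℕ :=
  (univ.filter fun u : Fin m → Bool => fibP m u ∧ wt u = k).card

noncomputable def Flc (m k : ℕ) : ℕ :=
  (univ.filter fun u : Fin m → Bool => fibP m u ∧ lastF m u ∧ wt u = k).card

lemma Fc_zero (m : ℕ) : Fc m 0 = 1 := by
  unfold Fc
  have : (univ.filter fun u : Fin m → Bool => fibP m u ∧ wt u = 0)
      = {fun _ => false} := by
    ext u
    simp only [mem_filter, mem_univ, true_and, mem_singleton]
    constructor
    · rintro ⟨-, h⟩; exact (wt_eq_zero_iff u).mp h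
    · rintro rfl; exact ⟨fibP_zero_aux, by simp [wt]⟩
  rw [this, card_singleton]

lemma Flc_zero (m : ℕ) : Flc m 0 = 1 := by
  unfold Flc
  have : (univ.filter fun u : Fin m → Bool => fibP m u ∧ lastF m u ∧ wt u = 0)
      = {fun _ => false} := by
    ext u
    simp only [mem_filter, mem_univ, true_and, mem_singleton]
    constructor
    · rintro ⟨-, -, h⟩; exact (wt_eq_zero_iff u).mp h
    · rintro rfl; exact ⟨fibP_zero_aux, lastF_zero_aux, by simp [wt]⟩
  rw [this, card_singleton]

lemma Fc_fin_zero (k : ℕ) : Fc 0 k = if k = 0 then 1 else 0 := by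
  unfold Fc
  rw [card_filter_fin_zero]
  congr 1
  simp only [eq_iff_iff]
  constructor
  · rintro ⟨-, h⟩; rw [← h]; simp [wt]
  · rintro rfl
    exact ⟨fun i h => by omega, by simp [wt]⟩

lemma Flc_fin_zero (k : ℕ) : Flc 0 k = if k = 0 then 1 else 0 := by
  unfold Flc
  rw [card_filter_fin_zero]
  congr 1
  simp only [eq_iff_iff]
  constructor
  · rintro ⟨-, -, h⟩; rw [← h]; simp [wt]
  · rintro rfl
    exact ⟨fun i h => by omega, fun h => by omega, by simp [wt]⟩

lemma wt_elim0 : wt (fun i : Fin 0 => i.elim0) = 0 := by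
  unfold wt
  simp

lemma fibP_fin0 (u : Fin 0 → Bool) : fibP 0 u := fun i h => by omega

lemma fibP_fin1 (u : Fin 1 → Bool) : fibP 1 u := fun i h => by omega

lemma wt_fcons_false {m : ℕ} (v : Fin m → Bool) : wt (fcons false v) = wt v := by
  rw [wt_fcons]; simp

lemma wt_fcons_true {m : ℕ} (v : Fin m → Bool) : wt (fcons true v) = wt v + 1 := by
  rw [wt_fcons]; simp [Nat.add_comm]

lemma Fc_one (k : ℕ) : Fc 1 k = (2 - k).choose k := by
  unfold Fc
  rw [card_cons_split, card_filter_fin_zero, card_filter_fin_zero]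
  have h1 : (fibP 1 (fcons false fun i => i.elim0) ∧ wt (fcons false fun i => i.elim0) = k)
      ↔ k = 0 := by
    constructor
    · rintro ⟨-, h⟩
      rw [wt_fcons, wt_elim0] at h
      simpa using h.symm
    · rintro rfl
      exact ⟨fibP_fin1 _, by rw [wt_fcons, wt_elim0]; simp⟩
  have h2 : (fibP 1 (fcons true fun i => i.elim0) ∧ wt (fcons true fun i => i.elim0) = k)
      ↔ k = 1 := by
    constructor
    · rintro ⟨-, h⟩
      rw [wt_fcons, wt_elim0] at h
      simpa using h.symm
    · rintro rfl
      exact ⟨fibP_fin1 _, by rw [wt_fcons, wt_elim0]; simp⟩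
  rw [if_congr h1 rfl rfl, if_congr h2 rfl rfl]
  match k with
  | 0 => simp
  | 1 => simp
  | (k + 2) => simp [Nat.choose_eq_zero_of_lt]

lemma Fc_succ_succ (m k : ℕ) : Fc (m + 2) (k + 1) = Fc (m + 1) (k + 1) + Fc m k := by
  unfold Fc
  rw [card_cons_split]
  congr 1
  · apply congrArg
    apply Finset.filter_congr
    intro v _
    rw [fibP_fcons, wt_fcons_false]
    constructor
    · rintro ⟨⟨h1, -⟩, h2⟩; exact ⟨h1, h2⟩
    · rintro ⟨h1, h2⟩; exact ⟨⟨h1, fun h hc => by simp at hc⟩, h2⟩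
  · have step1 : (univ.filter fun v : Fin (m + 1) → Bool =>
        fibP (m + 2) (fcons true v) ∧ wt (fcons true v) = k + 1)
        = univ.filter fun v : Fin (m + 1) → Bool =>
            fibP (m + 1) v ∧ v 0 = false ∧ wt v = k := by
      apply Finset.filter_congr
      intro v _
      rw [fibP_fcons, wt_fcons_true]
      constructor
      · rintro ⟨⟨h1, h2⟩, h3⟩
        have h0 : v 0 = false := by
          have hne := h2 (by omega)
          rcases hb : v ⟨0, by omega⟩ with _ | _
          · exact hb
          · exact absurd ⟨rfl, hb⟩ hne
        exact ⟨h1, h0, by omega⟩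
      · rintro ⟨h1, h0, h3⟩
        refine ⟨⟨h1, fun h hc => ?_⟩, by omega⟩
        rw [show (⟨0, h⟩ : Fin (m + 1)) = 0 from rfl, h0] at hc
        simp at hc
    rw [step1, card_cons_split]
    have htrue : (univ.filter fun w : Fin m → Bool =>
        fibP (m + 1) (fcons true w) ∧ (fcons true w) 0 = false ∧ wt (fcons true w) = k)
        = ∅ := by
      apply Finset.filter_false_of_mem
      intro w _
      rintro ⟨-, h0, -⟩
      simp at h0
    have hfalse : (univ.filter fun w : Fin m → Bool =>
        fibP (m + 1) (fcons false w) ∧ (fcons false w) 0 = false ∧ wt (fcons false w) = k)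
        = univ.filter fun w : Fin m → Bool => fibP m w ∧ wt w = k := by
      apply Finset.filter_congr
      intro w _
      rw [fibP_fcons, wt_fcons_false]
      simp only [fcons_zero]
      constructor
      · rintro ⟨⟨h1, -⟩, -, h2⟩; exact ⟨h1, h2⟩
      · rintro ⟨h1, h2⟩
        exact ⟨⟨h1, fun h hc => by simp at hc⟩, trivial, h2⟩
    rw [htrue, hfalse, card_empty]
    exact Nat.add_zero _

lemma Fc_eq : ∀ m k, Fc m k = (m + 1 - k).choose k := by
  intro m
  induction m using Nat.strong_induction_on with
  | _ m ih =>
    match m with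
    | 0 =>
      intro k
      rw [Fc_fin_zero]
      match k with
      | 0 => simp
      | (k + 1) => simp [Nat.choose_eq_zero_of_lt]
    | 1 => exact fun k => Fc_one k
    | (m + 2) =>
      intro k
      match k with
      | 0 => rw [Fc_zero]; simp
      | (k + 1) =>
        rw [Fc_succ_succ, ih (m + 1) (by omega), ih m (by omega)]
        by_cases hk : k ≤ m + 1
        · rw [show m + 1 + 1 - (k + 1) = (m + 1 - k) from by omega,
            show m + 2 + 1 - (k + 1) = (m + 1 - k) + 1 from by omega,
            Nat.choose_succ_succ]
          exact Nat.add_comm _ _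
        · rw [show m + 1 + 1 - (k + 1) = 0 from by omega,
            show m + 1 - k = 0 from by omega,
            show m + 2 + 1 - (k + 1) = 0 from by omega]
          simp [Nat.choose_eq_zero_of_lt (show (0:ℕ) < k by omega),
            Nat.choose_eq_zero_of_lt (show (0:ℕ) < k + 1 by omega)]

lemma lastF_fin0 (u : Fin 0 → Bool) : lastF 0 u := fun h => absurd h (lt_irrefl 0)

lemma lastF_fcons_false_iff {m : ℕ} (w : Fin m → Bool) :
    lastF (m + 1) (fcons false w) ↔ lastF m w := by
  cases m with
  | zero => exact iff_of_true ((lastF_fcons_zero _ _).mpr rfl) (lastF_fin0 w)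
  | succ m' => exact lastF_fcons_pos _ _

lemma Flc_one (k : ℕ) : Flc 1 k = (1 - k).choose k := by
  unfold Flc
  rw [card_cons_split, card_filter_fin_zero, card_filter_fin_zero]
  have h1 : (fibP 1 (fcons false fun i => i.elim0) ∧ lastF 1 (fcons false fun i => i.elim0)
      ∧ wt (fcons false fun i => i.elim0) = k) ↔ k = 0 := by
    constructor
    · rintro ⟨-, -, h⟩
      rw [wt_fcons_false, wt_elim0] at h
      exact h.symm
    · rintro rfl
      exact ⟨fibP_fin1 _, (lastF_fcons_zero _ _).mpr rfl, by rw [wt_fcons_false, wt_elim0]⟩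
  have h2 : ¬(fibP 1 (fcons true fun i => i.elim0) ∧ lastF 1 (fcons true fun i => i.elim0)
      ∧ wt (fcons true fun i => i.elim0) = k) := by
    rintro ⟨-, h, -⟩
    have := (lastF_fcons_zero _ _).mp h
    simp at this
  rw [if_congr h1 rfl rfl, if_neg h2]
  match k with
  | 0 => simp
  | (k + 1) => simp [Nat.choose_eq_zero_of_lt]

lemma card_headFalse (m k : ℕ) :
    (univ.filter fun v : Fin (m + 1) → Bool =>
        fibP (m + 1) v ∧ v 0 = false ∧ lastF (m + 1) v ∧ wt v = k).card = Flc m k := by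
  unfold Flc
  rw [card_cons_split]
  have htrue : (univ.filter fun w : Fin m → Bool =>
      fibP (m + 1) (fcons true w) ∧ (fcons true w) 0 = false
        ∧ lastF (m + 1) (fcons true w) ∧ wt (fcons true w) = k)
      = ∅ := by
    apply Finset.filter_false_of_mem
    intro w _
    rintro ⟨-, h0, -⟩
    simp at h0
  have hfalse : (univ.filter fun w : Fin m → Bool =>
      fibP (m + 1) (fcons false w) ∧ (fcons false w) 0 = false
        ∧ lastF (m + 1) (fcons false w) ∧ wt (fcons false w) = k)
      = univ.filter fun w : Fin m → Bool => fibP m w ∧ lastF m w ∧ wt w = k := by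
    apply Finset.filter_congr
    intro w _
    rw [fibP_fcons, wt_fcons_false, lastF_fcons_false_iff]
    simp only [fcons_zero]
    constructor
    · rintro ⟨⟨h1, -⟩, -, h2, h3⟩; exact ⟨h1, h2, h3⟩
    · rintro ⟨h1, h2, h3⟩
      exact ⟨⟨h1, fun h hc => by simp at hc⟩, trivial, h2, h3⟩
  rw [htrue, hfalse, card_empty]
  exact Nat.add_zero _

lemma Flc_succ_succ (m k : ℕ) : Flc (m + 2) (k + 1) = Flc (m + 1) (k + 1) + Flc m k := by
  conv_lhs => rw [Flc]
  rw [card_cons_split]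
  congr 1
  · rw [Flc]
    apply congrArg
    apply Finset.filter_congr
    intro v _
    rw [fibP_fcons, wt_fcons_false, lastF_fcons_pos]
    constructor
    · rintro ⟨⟨h1, -⟩, h2, h3⟩; exact ⟨h1, h2, h3⟩
    · rintro ⟨h1, h2, h3⟩; exact ⟨⟨h1, fun h hc => by simp at hc⟩, h2, h3⟩
  · have step1 : (univ.filter fun v : Fin (m + 1) → Bool =>
        fibP (m + 2) (fcons true v) ∧ lastF (m + 2) (fcons true v)
          ∧ wt (fcons true v) = k + 1)
        = univ.filter fun v : Fin (m + 1) → Bool =>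
            fibP (m + 1) v ∧ v 0 = false ∧ lastF (m + 1) v ∧ wt v = k := by
      apply Finset.filter_congr
      intro v _
      rw [fibP_fcons, wt_fcons_true, lastF_fcons_pos]
      constructor
      · rintro ⟨⟨h1, h2⟩, hl, h3⟩
        have h0 : v 0 = false := by
          have hne := h2 (by omega)
          rcases hb : v ⟨0, by omega⟩ with _ | _
          · exact hb
          · exact absurd ⟨rfl, hb⟩ hne
        exact ⟨h1, h0, hl, by omega⟩
      · rintro ⟨h1, h0, hl, h3⟩
        refine ⟨⟨h1, fun h hc => ?_⟩, hl, by omega⟩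
        rw [show (⟨0, h⟩ : Fin (m + 1)) = 0 from rfl, h0] at hc
        simp at hc
    rw [step1, card_headFalse]

lemma Flc_fin_eq : ∀ m k, Flc m k = (m - k).choose k := by
  intro m
  induction m using Nat.strong_induction_on with
  | _ m ih =>
    match m with
    | 0 =>
      intro k
      rw [Flc_fin_zero]
      match k with
      | 0 => simp
      | (k + 1) => simp [Nat.choose_eq_zero_of_lt]
    | 1 => exact fun k => Flc_one k
    | (m + 2) =>
      intro k
      match k with
      | 0 => rw [Flc_zero]; simp
      | (k + 1) =>
        rw [Flc_succ_succ, ih (m + 1) (by omega), ih m (by omega)]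
        by_cases hk : k ≤ m
        · rw [show m + 1 - (k + 1) = (m - k) from by omega,
            show m + 2 - (k + 1) = (m - k) + 1 from by omega,
            Nat.choose_succ_succ]
          exact Nat.add_comm _ _
        · rw [show m + 1 - (k + 1) = 0 from by omega,
            show m - k = 0 from by omega,
            show m + 2 - (k + 1) = m + 1 - k from by omega]
          rcases Nat.lt_or_ge (m + 1) k with h | h
          · rw [show m + 1 - k = 0 from by omega]
            simp [Nat.choose_eq_zero_of_lt (show (0:ℕ) < k by omega),
              Nat.choose_eq_zero_of_lt (show (0:ℕ) < k + 1 by omega)]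
          · have hkm : k = m + 1 := by omega
            subst hkm
            simp [Nat.choose_eq_zero_of_lt]



lemma mem_fibSet_iff {m : ℕ} (u : Fin m → Bool) : u ∈ fibSet m ↔ fibP m u := by
  constructor
  · intro H i h
    exact H ⟨i, by omega⟩ ⟨i + 1, h⟩ rfl
  · intro H i j hj
    obtain ⟨iv, hiv⟩ := i
    obtain ⟨jv, hjv⟩ := j
    simp only at hj
    subst hj
    exact H iv hjv

lemma mem_lucasSet_iff {m : ℕ} (u : Fin (m + 2) → Bool) :
    u ∈ lucasSet (m + 2) ↔
      fibP (m + 2) u ∧ ¬(u 0 = true ∧ u ⟨m + 1, by omega⟩ = true) := by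
  constructor
  · rintro ⟨h1, h2⟩
    exact ⟨(mem_fibSet_iff u).mp h1, h2 0 ⟨m + 1, by omega⟩ rfl rfl⟩
  · rintro ⟨h1, h2⟩
    refine ⟨(mem_fibSet_iff u).mpr h1, ?_⟩
    intro i j hi hj
    obtain ⟨iv, hiv⟩ := i
    obtain ⟨jv, hjv⟩ := j
    simp only at hi hj
    subst hi
    subst hj
    exact h2

noncomputable def Lc (n k : ℕ) : ℕ :=
  (univ.filter fun u : Fin n → Bool => u ∈ lucasSet n ∧ wt u = k).card

lemma Lc_zero (n : ℕ) : Lc n 0 = 1 := by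
  unfold Lc
  have : (univ.filter fun u : Fin n → Bool => u ∈ lucasSet n ∧ wt u = 0)
      = {fun _ => false} := by
    ext u
    simp only [mem_filter, mem_univ, true_and, mem_singleton]
    constructor
    · rintro ⟨-, h⟩; exact (wt_eq_zero_iff u).mp h
    · rintro rfl; exact ⟨zero_mem_lucasSet n, by simp [wt]⟩
  rw [this, card_singleton]

lemma Lc_succ (m k : ℕ) : Lc (m + 2) (k + 1) = Fc (m + 1) (k + 1) + Flc m k := by
  unfold Lc
  have hcongr : (univ.filter fun u : Fin (m + 2) → Bool => u ∈ lucasSet (m + 2) ∧ wt u = k + 1)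
      = univ.filter fun u : Fin (m + 2) → Bool =>
          (fibP (m + 2) u ∧ ¬(u 0 = true ∧ u ⟨m + 1, by omega⟩ = true)) ∧ wt u = k + 1 := by
    apply Finset.filter_congr
    intro u _
    rw [mem_lucasSet_iff]
  rw [hcongr, card_cons_split]
  congr 1
  · rw [Fc]
    apply congrArg
    apply Finset.filter_congr
    intro v _
    rw [fibP_fcons, wt_fcons_false]
    constructor
    · rintro ⟨⟨⟨h1, -⟩, -⟩, h2⟩; exact ⟨h1, h2⟩
    · rintro ⟨h1, h2⟩
      refine ⟨⟨⟨h1, fun h hc => by simp at hc⟩, ?_⟩, h2⟩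
      rintro ⟨hc, -⟩
      simp at hc
  · have step1 : (univ.filter fun v : Fin (m + 1) → Bool =>
        (fibP (m + 2) (fcons true v)
          ∧ ¬((fcons true v) 0 = true ∧ (fcons true v) ⟨m + 1, by omega⟩ = true))
          ∧ wt (fcons true v) = k + 1)
        = univ.filter fun v : Fin (m + 1) → Bool =>
            fibP (m + 1) v ∧ v 0 = false ∧ lastF (m + 1) v ∧ wt v = k := by
      apply Finset.filter_congr
      intro v _
      rw [fibP_fcons, wt_fcons_true]
      have hlast : (fcons true v) ⟨m + 1, by omega⟩ = v ⟨m, by omega⟩ :=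
        fcons_succ true v m (by omega)
      rw [hlast, fcons_zero]
      constructor
      · rintro ⟨⟨⟨h1, h2⟩, hcyc⟩, h3⟩
        have h0 : v 0 = false := by
          have hne := h2 (by omega)
          rcases hb : v ⟨0, by omega⟩ with _ | _
          · exact hb
          · exact absurd ⟨rfl, hb⟩ hne
        have hl : lastF (m + 1) v := by
          intro _
          rcases hb : v ⟨m + 1 - 1, by omega⟩ with _ | _
          · rfl
          · exact absurd ⟨rfl, hb⟩ hcyc
        exact ⟨h1, h0, hl, by omega⟩
      · rintro ⟨h1, h0, hl, h3⟩
        refine ⟨⟨⟨h1, fun h hc => ?_⟩, ?_⟩, by omega⟩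
        · rw [show (⟨0, h⟩ : Fin (m + 1)) = 0 from rfl, h0] at hc
          simp at hc
        · rintro ⟨-, hc⟩
          have := hl (by omega)
          rw [show (⟨m + 1 - 1, by omega⟩ : Fin (m + 1)) = ⟨m, by omega⟩ from rfl] at this
          rw [this] at hc
          simp at hc
    rw [step1, card_headFalse]

lemma Lc_formula (m k : ℕ) :
    Lc (m + 2) (k + 1) = (m + 2 - (k + 1)).choose (k + 1) + (m - k).choose k := by
  rw [Lc_succ, Fc_eq, Flc_fin_eq]


lemma hamming_zero_eq_wt {n : ℕ} (v : Fin n → Bool) :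
    hammingDist (fun _ => false) v = wt v := by
  unfold hammingDist wt
  rw [Finset.card_filter]
  apply Finset.sum_congr rfl
  intro i _
  rcases h : v i with _ | _ <;> simp [h]

lemma walk_length_lb {n : ℕ} {S : Set (Fin n → Bool)} :
    ∀ {a b : ↥S} (p : ((Qcube n).induce S).Walk a b), hammingDist a.1 b.1 ≤ p.length := by
  intro a b p
  induction p with
  | nil => simp [hammingDist_self]
  | @cons u v w h q ih =>
    have h1 : hammingDist u.1 v.1 = 1 := h
    have h2 := hammingDist_triangle u.1 v.1 w.1
    rw [SimpleGraph.Walk.length_cons]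
    omega

lemma lucas_down {n : ℕ} {u v : Fin n → Bool} (h : ∀ i, u i = true → v i = true)
    (hv : v ∈ lucasSet n) : u ∈ lucasSet n := by
  obtain ⟨h1, h2⟩ := hv
  constructor
  · intro i j hj hc; exact h1 i j hj ⟨h _ hc.1, h _ hc.2⟩
  · intro i j hi hj hc; exact h2 i j hi hj ⟨h _ hc.1, h _ hc.2⟩

lemma exists_walk_aux (n : ℕ) : ∀ K, ∀ (v : Fin n → Bool) (hv : v ∈ lucasSet n), wt v ≤ K →
    ∃ p : ((Qcube n).induce (lucasSet n)).Walk ⟨fun _ => false, zero_mem_lucasSet n⟩ ⟨v, hv⟩,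
      p.length = wt v := by
  intro K
  induction K with
  | zero =>
    intro v hv hw
    have h0 : wt v = 0 := Nat.le_zero.mp hw
    have hv0 : v = fun _ => false := (wt_eq_zero_iff v).mp h0
    subst hv0
    exact ⟨SimpleGraph.Walk.nil, by simp [h0]⟩
  | succ K ih =>
    intro v hv hw
    by_cases h0 : wt v = 0
    · have hv0 : v = fun _ => false := (wt_eq_zero_iff v).mp h0
      subst hv0
      exact ⟨SimpleGraph.Walk.nil, by simp [h0]⟩
    · have hex : ∃ i, v i = true := by
        by_contra hc
        push_neg at hc
        apply h0
        rw [wt_eq_zero_iff]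
        funext i
        have := hc i
        simp only [ne_eq, Bool.not_eq_true] at this
        exact this
      obtain ⟨i, hi⟩ := hex
      set v' := Function.update v i false with hv'def
      have hle : ∀ j, v' j = true → v j = true := by
        intro j hj
        by_cases hji : j = i
        · subst hji
          rw [hv'def, Function.update_self] at hj
          simp at hj
        · rwa [hv'def, Function.update_of_ne hji] at hj
      have hv'mem : v' ∈ lucasSet n := lucas_down hle hv
      have hwt : wt v = wt v' + 1 := by
        unfold wt
        rw [← Finset.add_sum_erase _ _ (mem_univ i),
          ← Finset.add_sum_erase _ (fun j => if v' j then 1 else 0) (mem_univ i)]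
        have h1 : (if v i then (1:ℕ) else 0) = 1 := by simp [hi]
        have h2 : (if v' i then (1:ℕ) else 0) = 0 := by
          simp [hv'def, Function.update_self]
        have h3 : ∀ j ∈ univ.erase i, (if v' j then (1:ℕ) else 0) = (if v j then 1 else 0) := by
          intro j hj
          rw [hv'def, Function.update_of_ne (Finset.mem_erase.mp hj).1]
        rw [Finset.sum_congr rfl h3, h1, h2]
        omega
      have hadj : ((Qcube n).induce (lucasSet n)).Adj ⟨v', hv'mem⟩ ⟨v, hv⟩ := by
        show hammingDist v' v = 1
        unfold hammingDist
        apply Finset.card_eq_one.mpr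
        refine ⟨i, ?_⟩
        ext j
        simp only [Finset.mem_filter, Finset.mem_univ, true_and, Finset.mem_singleton, ne_eq]
        constructor
        · intro hne
          by_contra hji
          apply hne
          rw [hv'def, Function.update_of_ne hji]
        · rintro rfl
          rw [hv'def, Function.update_self, hi]
          simp
      obtain ⟨p, hp⟩ := ih v' hv'mem (by omega)
      refine ⟨p.concat hadj, ?_⟩
      rw [SimpleGraph.Walk.length_concat, hp]
      omega

lemma dist_eq_wt (n : ℕ) (v : Fin n → Bool) (hv : v ∈ lucasSet n) :
    ((Qcube n).induce (lucasSet n)).dist ⟨fun _ => false, zero_mem_lucasSet n⟩ ⟨v, hv⟩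
      = wt v := by
  obtain ⟨p, hp⟩ := exists_walk_aux n (wt v) v hv le_rfl
  apply le_antisymm
  · rw [← hp]
    exact SimpleGraph.dist_le p
  · obtain ⟨q, hq⟩ := SimpleGraph.Reachable.exists_walk_length_eq_dist ⟨p⟩
    calc wt v = hammingDist (fun _ => false) v := (hamming_zero_eq_wt v).symm
      _ ≤ q.length := walk_length_lb q
      _ = _ := hq

lemma wCount_eq_Lc (n k : ℕ) :
    wCount ((Qcube n).induce (lucasSet n)) ⟨fun _ => false, zero_mem_lucasSet n⟩ k
      = Lc n k := by
  unfold wCount Lc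
  have hset : {v : ↥(lucasSet n) |
      ((Qcube n).induce (lucasSet n)).dist ⟨fun _ => false, zero_mem_lucasSet n⟩ v = k}
      = {v : ↥(lucasSet n) | wt v.1 = k} := by
    ext ⟨v, hv⟩
    rw [Set.mem_setOf_eq, Set.mem_setOf_eq, dist_eq_wt]
  rw [hset, ← Nat.card_coe_set_eq]
  have e : ↥{v : ↥(lucasSet n) | wt v.1 = k}
      ≃ {u : Fin n → Bool // u ∈ lucasSet n ∧ wt u = k} :=
    { toFun := fun v => ⟨v.1.1, v.1.2, v.2⟩
      invFun := fun u => ⟨⟨u.1, u.2.1⟩, u.2.2⟩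
      left_inv := fun v => rfl
      right_inv := fun u => rfl }
  rw [Nat.card_congr e, Nat.card_eq_fintype_card, Fintype.card_subtype]

theorem W_polynomial_of_Lucas_cube (n : ℕ) (hn : 2 ≤ n) :
    (∀ k : ℕ,
      (wCount ((Qcube n).induce (lucasSet n)) ⟨fun _ => false, zero_mem_lucasSet n⟩ k : ℝ) =
        2 * ((n - k).choose k : ℝ) - ((n - k - 1).choose k : ℝ))
    ∧ ∀ x : ℝ,
      ∑ d ∈ Finset.range (2 ^ n + 1),
        (wCount ((Qcube n).induce (lucasSet n)) ⟨fun _ => false, zero_mem_lucasSet n⟩ d : ℝ)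
          * x ^ d =
      ∑ k ∈ Finset.range (n / 2 + 1),
        (2 * ((n - k).choose k : ℝ) - ((n - k - 1).choose k : ℝ)) * x ^ k := by
  obtain ⟨m, rfl⟩ : ∃ m, n = m + 2 := ⟨n - 2, by omega⟩
  have h1 : ∀ k : ℕ,
      (wCount ((Qcube (m + 2)).induce (lucasSet (m + 2)))
          ⟨fun _ => false, zero_mem_lucasSet (m + 2)⟩ k : ℝ) =
        2 * ((m + 2 - k).choose k : ℝ) - ((m + 2 - k - 1).choose k : ℝ) := by
    intro k
    rw [wCount_eq_Lc]
    match k with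
    | 0 =>
      rw [Lc_zero]
      norm_num
    | (k + 1) =>
      rw [Lc_formula]
      by_cases hk : k ≤ m
      · rw [show m + 2 - (k + 1) = (m - k) + 1 from by omega,
          show (m - k) + 1 - 1 = m - k from by omega,
          Nat.choose_succ_succ]
        push_cast
        ring
      · rw [show m + 2 - (k + 1) = 0 from by omega, show m - k = 0 from by omega]
        simp [Nat.choose_eq_zero_of_lt (show (0:ℕ) < k from by omega),
          Nat.choose_eq_zero_of_lt (show (0:ℕ) < k + 1 from by omega)]
  refine ⟨h1, fun x => ?_⟩
  have hsub : Finset.range ((m + 2) / 2 + 1) ⊆ Finset.range (2 ^ (m + 2) + 1) := by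
    intro d hd
    simp only [Finset.mem_range] at *
    have := Nat.lt_two_pow_self (n := m + 2)
    omega
  calc ∑ d ∈ Finset.range (2 ^ (m + 2) + 1),
        (wCount ((Qcube (m + 2)).induce (lucasSet (m + 2)))
            ⟨fun _ => false, zero_mem_lucasSet (m + 2)⟩ d : ℝ) * x ^ d
      = ∑ d ∈ Finset.range (2 ^ (m + 2) + 1),
          (2 * (((m + 2) - d).choose d : ℝ) - (((m + 2) - d - 1).choose d : ℝ)) * x ^ d :=
        Finset.sum_congr rfl fun d _ => by rw [h1 d]
    _ = ∑ k ∈ Finset.range ((m + 2) / 2 + 1),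
          (2 * (((m + 2) - k).choose k : ℝ) - (((m + 2) - k - 1).choose k : ℝ)) * x ^ k := by
        refine (Finset.sum_subset hsub ?_).symm
        intro d hd hnd
        simp only [Finset.mem_range] at hd hnd
        have hda : m + 2 - d < d := by omega
        have hdb : m + 2 - d - 1 < d := by omega
        rw [Nat.choose_eq_zero_of_lt hda, Nat.choose_eq_zero_of_lt hdb]
        norm_num
end

section
/- If G = Q_n(X) is a daisy cube, then D_{G,u}(x, −x) = 1 holds for every vertex u of G; that is, for every vertex u of G and every value of x, Σ_{k,d≥0} c_{k,d}(G) x^k (−x)^d = 1, where c_{k,d}(G) counts induced k-cubes of G at distance d from u. -/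
open Finset

namespace DaisyProof

variable {n : ℕ} {X : Set (Fin n → Bool)}

lemma daisy_down {u v : Fin n → Bool} (h : u ≤ v) (hv : v ∈ daisySet X) : u ∈ daisySet X := by
  obtain ⟨x, hx, hvx⟩ := hv
  exact ⟨x, hx, le_trans h hvx⟩

lemma qadj_iff (u v : Fin n → Bool) : (Qcube n).Adj u v ↔ hammingDist u v = 1 := Iff.rfl

lemma induce_adj_iff (S : Set (Fin n → Bool)) (u v : ↥S) :
    ((Qcube n).induce S).Adj u v ↔ hammingDist u.1 v.1 = 1 := Iff.rfl

lemma ham_update_ne (v : Fin n → Bool) (j : Fin n) (c : Bool) (hc : c ≠ v j) :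
    hammingDist v (Function.update v j c) = 1 := by
  have : ({i | v i ≠ Function.update v j c i} : Finset (Fin n)) = {j} := by
    ext i
    by_cases hij : i = j <;> simp [Function.update, hij, Ne.symm hc]
  rw [hammingDist, this, card_singleton]

lemma ham_update_target (v w : Fin n → Bool) (j : Fin n) :
    ({i | Function.update v j (w j) i ≠ w i} : Finset (Fin n))
      = ({i | v i ≠ w i} : Finset (Fin n)).erase j := by
  ext i
  by_cases hij : i = j <;> simp [Function.update, hij]

lemma step (v w : ↥(daisySet X)) (hne : v.1 ≠ w.1) :
    ∃ v' : ↥(daisySet X), hammingDist v.1 v'.1 = 1 ∧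
      hammingDist v'.1 w.1 + 1 = hammingDist v.1 w.1 := by
  obtain ⟨j, hj⟩ : ∃ j, v.1 j ≠ w.1 j := by
    by_contra h
    push_neg at h
    exact hne (funext h)
  -- choose the coordinate to flip
  have hmem : ∀ (j' : Fin n), v.1 j' ≠ w.1 j' →
      (j' ∈ ({i | v.1 i ≠ w.1 i} : Finset (Fin n))) := by
    intro j' h; simp [h]
  by_cases hcase : ∃ j', v.1 j' = true ∧ w.1 j' = false
  · obtain ⟨j', hv', hw'⟩ := hcase
    have hj'ne : v.1 j' ≠ w.1 j' := by simp [hv', hw']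
    have hdaisy : Function.update v.1 j' (w.1 j') ∈ daisySet X := by
      refine daisy_down ?_ v.2
      intro i
      by_cases hij : i = j' <;> simp [Function.update, hij, hw']
    refine ⟨⟨_, hdaisy⟩, ham_update_ne v.1 j' (w.1 j') (by simp [hv', hw']), ?_⟩
    have h1 : hammingDist (Function.update v.1 j' (w.1 j')) w.1
        = (({i | v.1 i ≠ w.1 i} : Finset (Fin n)).erase j').card := by
      rw [hammingDist, ham_update_target]
    rw [h1, hammingDist, card_erase_of_mem (hmem j' hj'ne)]
    have : 0 < ({i | v.1 i ≠ w.1 i} : Finset (Fin n)).card :=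
      card_pos.mpr ⟨j', hmem j' hj'ne⟩
    omega
  · push_neg at hcase
    -- every differing coordinate has v = false, w = true; so flipping j up stays ≤ w
    have hvj : v.1 j = false := by
      cases hv : v.1 j
      · rfl
      · exact absurd (hcase j hv) (by simpa [hv] using hj)
    have hwj : w.1 j = true := by
      cases hw : w.1 j
      · rw [hvj, hw] at hj; exact absurd rfl hj
      · rfl
    have hdaisy : Function.update v.1 j (w.1 j) ∈ daisySet X := by
      refine daisy_down ?_ w.2
      intro i
      by_cases hij : i = j
      · simp [Function.update, hij]
      · simp only [Function.update, hij, dif_neg, dite_eq_ite, if_neg hij]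
        cases hv : v.1 i
        · exact Bool.false_le _
        · have := hcase i hv
          cases hw : w.1 i
          · exact absurd hw (by simpa using this)
          · exact le_refl _
    refine ⟨⟨_, hdaisy⟩, ham_update_ne v.1 j (w.1 j) (by simp [hvj, hwj]), ?_⟩
    have h1 : hammingDist (Function.update v.1 j (w.1 j)) w.1
        = (({i | v.1 i ≠ w.1 i} : Finset (Fin n)).erase j).card := by
      rw [hammingDist, ham_update_target]
    rw [h1, hammingDist, card_erase_of_mem (hmem j hj)]
    have : 0 < ({i | v.1 i ≠ w.1 i} : Finset (Fin n)).card :=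
      card_pos.mpr ⟨j, hmem j hj⟩
    omega

lemma exists_walk : ∀ (m : ℕ) (v w : ↥(daisySet X)), hammingDist v.1 w.1 = m →
    ∃ p : ((Qcube n).induce (daisySet X)).Walk v w, p.length = m := by
  intro m
  induction m with
  | zero =>
    intro v w h
    have : v = w := Subtype.ext (hammingDist_eq_zero.mp h)
    subst this
    exact ⟨SimpleGraph.Walk.nil, rfl⟩
  | succ m ih =>
    intro v w h
    have hne : v.1 ≠ w.1 := by
      intro he
      rw [he, hammingDist_self] at h
      omega
    obtain ⟨v', h1, h2⟩ := step v w hne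
    have hadj : ((Qcube n).induce (daisySet X)).Adj v v' := h1
    obtain ⟨p, hp⟩ := ih v' w (by omega)
    exact ⟨SimpleGraph.Walk.cons hadj p, by simp [hp]⟩

lemma walk_length_ge (v w : ↥(daisySet X)) (p : ((Qcube n).induce (daisySet X)).Walk v w) :
    hammingDist v.1 w.1 ≤ p.length := by
  induction p with
  | nil => simp
  | @cons a b c hadj q ih =>
    have h1 : hammingDist a.1 b.1 = 1 := hadj
    calc hammingDist a.1 c.1 ≤ hammingDist a.1 b.1 + hammingDist b.1 c.1 :=
          hammingDist_triangle _ _ _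
    _ ≤ 1 + q.length := by rw [h1]; omega
    _ = _ := by simp [Nat.add_comm]

lemma dist_eq_hamming (v w : ↥(daisySet X)) :
    ((Qcube n).induce (daisySet X)).dist v w = hammingDist v.1 w.1 := by
  obtain ⟨p, hp⟩ := exists_walk (hammingDist v.1 w.1) v w rfl
  refine le_antisymm (hp ▸ SimpleGraph.dist_le p) ?_
  have hreach : ((Qcube n).induce (daisySet X)).Reachable v w := ⟨p⟩
  obtain ⟨q, hq⟩ := hreach.exists_walk_length_eq_dist
  rw [← hq]
  exact walk_length_ge v w q


def cubeSet (X : Set (Fin n → Bool)) (b t : Fin n → Bool) : Set ↥(daisySet X) :=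
  {v | b ≤ v.1 ∧ v.1 ≤ t}

lemma bt_of_mem {b t : Fin n → Bool} (hbt : b ≤ t) {j : Fin n}
    (hj : j ∈ ({j | b j ≠ t j} : Finset (Fin n))) : b j = false ∧ t j = true := by
  simp only [mem_filter, mem_univ, true_and] at hj
  have := hbt j
  cases hb : b j <;> cases ht : t j <;> simp_all <;> exact absurd this (by simp [Bool.le_iff_imp])

lemma squeeze {b t w : Fin n → Bool} {j : Fin n}
    (hj : j ∉ ({j | b j ≠ t j} : Finset (Fin n))) (h1 : b ≤ w) (h2 : w ≤ t) : w j = b j := by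
  simp only [mem_filter, mem_univ, true_and, not_not] at hj
  have h1j := h1 j
  have h2j := h2 j
  rw [← hj] at h2j
  exact le_antisymm h2j h1j

section CubeIso

variable (b t : Fin n → Bool)

private def Dbt : Finset (Fin n) := {j | b j ≠ t j}

noncomputable def cubeToFun (w : ↥(cubeSet X b t)) : Fin (Dbt b t).card → Bool :=
  fun i => w.1.1 ((Dbt b t).equivFin.symm i).1

lemma ham_cubeToFun (w w' : ↥(cubeSet X b t)) :
    hammingDist (cubeToFun b t w) (cubeToFun b t w') = hammingDist w.1.1 w'.1.1 := by
  classical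
  have hinj : Function.Injective (fun i => (((Dbt b t).equivFin.symm i).1 : Fin n)) :=
    fun i i' h => by
      apply (Dbt b t).equivFin.symm.injective
      exact Subtype.ext h
  have hset : ({j | w.1.1 j ≠ w'.1.1 j} : Finset (Fin n))
      = ({i | cubeToFun b t w i ≠ cubeToFun b t w' i} : Finset (Fin (Dbt b t).card)).image
          (fun i => ((Dbt b t).equivFin.symm i).1) := by
    ext j
    simp only [mem_filter, mem_univ, true_and, mem_image]
    constructor
    · intro hj
      have hjD : j ∈ Dbt b t := by
        by_contra hjD
        rw [squeeze hjD w.2.1 w.2.2, squeeze hjD w'.2.1 w'.2.2] at hj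
        exact hj rfl
      refine ⟨(Dbt b t).equivFin ⟨j, hjD⟩, ?_, by simp⟩
      simpa [cubeToFun] using hj
    · rintro ⟨i, hi, rfl⟩
      exact hi
  rw [hammingDist, hammingDist, hset, card_image_of_injective _ hinj]

lemma phi_mem (hbt : b ≤ t) (ht : t ∈ daisySet X) (v : Fin (Dbt b t).card → Bool) :
    (fun j => if hj : j ∈ Dbt b t then v ((Dbt b t).equivFin ⟨j, hj⟩) else b j) ∈ daisySet X := by
  refine daisy_down ?_ ht
  intro j
  by_cases hj : j ∈ Dbt b t
  · simp only [dif_pos hj]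
    rw [(bt_of_mem hbt hj).2]
    exact Bool.le_true _
  · simp only [dif_neg hj]
    exact hbt j

lemma phi_mem_cube (hbt : b ≤ t) (ht : t ∈ daisySet X) (v : Fin (Dbt b t).card → Bool) :
    (⟨(fun j => if hj : j ∈ Dbt b t then v ((Dbt b t).equivFin ⟨j, hj⟩) else b j),
      phi_mem b t hbt ht v⟩ : ↥(daisySet X)) ∈ cubeSet X b t := by
  constructor
  · intro j
    by_cases hj : j ∈ Dbt b t
    · simp only [dif_pos hj]
      rw [(bt_of_mem hbt hj).1]
      exact Bool.false_le _
    · simp only [dif_neg hj]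
      exact le_refl _
  · intro j
    by_cases hj : j ∈ Dbt b t
    · simp only [dif_pos hj]
      rw [(bt_of_mem hbt hj).2]
      exact Bool.le_true _
    · simp only [dif_neg hj]
      exact hbt j

noncomputable def cubeEquiv (hbt : b ≤ t) (ht : t ∈ daisySet X) :
    ↥(cubeSet X b t) ≃ (Fin (Dbt b t).card → Bool) where
  toFun := cubeToFun b t
  invFun := fun v => ⟨⟨_, phi_mem b t hbt ht v⟩, phi_mem_cube b t hbt ht v⟩
  left_inv := by
    rintro ⟨⟨w, hw⟩, hwc⟩
    apply Subtype.ext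
    apply Subtype.ext
    funext j
    by_cases hj : j ∈ Dbt b t
    · simp only [dif_pos hj, cubeToFun, Equiv.symm_apply_apply]
    · simp only [dif_neg hj]
      exact (squeeze hj hwc.1 hwc.2).symm
  right_inv := by
    intro v
    funext i
    simp only [cubeToFun]
    have h1 : (((Dbt b t).equivFin.symm i).1 : Fin n) ∈ Dbt b t := ((Dbt b t).equivFin.symm i).2
    simp only [dif_pos h1]
    congr 1
    rw [show (⟨((Dbt b t).equivFin.symm i).1, h1⟩ : ↥(Dbt b t)) = (Dbt b t).equivFin.symm i from
      Subtype.ext rfl]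
    exact Equiv.apply_symm_apply _ _

lemma cube_iso (hbt : b ≤ t) (ht : t ∈ daisySet X) :
    Nonempty ((((Qcube n).induce (daisySet X)).induce (cubeSet X b t))
      ≃g Qcube (Dbt b t).card) := by
  refine ⟨⟨cubeEquiv b t hbt ht, ?_⟩⟩
  intro w w'
  show hammingDist (cubeToFun b t w) (cubeToFun b t w') = 1 ↔ hammingDist w.1.1 w'.1.1 = 1
  rw [ham_cubeToFun]

end CubeIso


lemma bool_ne_iff {a b : Bool} (h : a ≠ b) : b = !a := by
  cases a <;> cases b <;> simp_all

lemma cn_struct {p q r : Fin n → Bool} (hpq : hammingDist p q = 2)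
    (hrp : hammingDist r p = 1) (hrq : hammingDist r q = 1) :
    ∃ γ, γ ∈ ({j | p j ≠ q j} : Finset (Fin n)) ∧ r = Function.update p γ (!(p γ)) := by
  have hrp' : ({j | r j ≠ p j} : Finset (Fin n)).card = 1 := hrp
  obtain ⟨γ, hγ⟩ := card_eq_one.mp hrp'
  have hγmem : ∀ j, r j ≠ p j ↔ j = γ := by
    intro j
    constructor
    · intro h
      have : j ∈ ({j | r j ≠ p j} : Finset (Fin n)) := by simp [h]
      rwa [hγ, mem_singleton] at this
    · intro h
      have h2 : j ∈ ({j' | r j' ≠ p j'} : Finset (Fin n)) := by rw [hγ]; simp [h]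
      simpa using h2
  have hγD : γ ∈ ({j | p j ≠ q j} : Finset (Fin n)) := by
    by_contra hγD
    have hpqγ : p γ = q γ := by simpa using hγD
    have hsub : insert γ ({j | p j ≠ q j} : Finset (Fin n))
        ⊆ ({j | r j ≠ q j} : Finset (Fin n)) := by
      intro j hj
      rcases mem_insert.mp hj with rfl | hj
      · have : r j ≠ p j := (hγmem j).mpr rfl
        simp only [mem_filter, mem_univ, true_and]
        rwa [← hpqγ]
      · have hjne : j ≠ γ := fun h => hγD (h ▸ hj)
        have : r j = p j := by
          by_contra h
          exact hjne ((hγmem j).mp h)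
        simp only [mem_filter, mem_univ, true_and, this]
        simpa using hj
    have hcard := card_le_card hsub
    rw [card_insert_of_notMem hγD] at hcard
    rw [hammingDist] at hpq hrq
    omega
  refine ⟨γ, hγD, funext fun j => ?_⟩
  by_cases hj : j = γ
  · subst hj
    rw [Function.update_self]
    exact bool_ne_iff (Ne.symm ((hγmem j).mpr rfl))
  · rw [Function.update_of_ne hj]
    by_contra h
    exact hj ((hγmem j).mp h)

lemma cn_two {p q r r' s : Fin n → Bool} (hpq : hammingDist p q = 2)
    (hrp : hammingDist r p = 1) (hrq : hammingDist r q = 1)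
    (hr'p : hammingDist r' p = 1) (hr'q : hammingDist r' q = 1)
    (hsp : hammingDist s p = 1) (hsq : hammingDist s q = 1)
    (hne : r ≠ r') : s = r ∨ s = r' := by
  obtain ⟨γ1, hγ1D, hr⟩ := cn_struct hpq hrp hrq
  obtain ⟨γ2, hγ2D, hr'⟩ := cn_struct hpq hr'p hr'q
  obtain ⟨γ3, hγ3D, hs⟩ := cn_struct hpq hsp hsq
  have hγ12 : γ1 ≠ γ2 := by
    rintro rfl
    exact hne (hr.trans hr'.symm)
  have hDeq : ({j | p j ≠ q j} : Finset (Fin n)) = {γ1, γ2} := by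
    symm
    apply eq_of_subset_of_card_le
    · intro j hj
      rcases mem_insert.mp hj with rfl | hj
      · exact hγ1D
      · rwa [mem_singleton.mp hj]
    · rw [card_insert_of_notMem (by simp [hγ12]), card_singleton]
      rw [hammingDist] at hpq
      omega
  rw [hDeq] at hγ3D
  rcases mem_insert.mp hγ3D with rfl | h3
  · exact Or.inl (hs.trans hr.symm)
  · rw [mem_singleton.mp h3] at hs
    exact Or.inr (hs.trans hr'.symm)

lemma filter_update_false (v : Fin n → Bool) (i : Fin n) :
    ({i0 | Function.update v i false i0 = true} : Finset (Fin n))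
      = ({i0 | v i0 = true} : Finset (Fin n)).erase i := by
  ext i0
  by_cases h : i0 = i <;> simp [Function.update, h]


lemma induced_cube_interval {k : ℕ} {S : Set ↥(daisySet X)}
    (e : (((Qcube n).induce (daisySet X)).induce S) ≃g Qcube k) :
    ∃ b t : Fin n → Bool, b ≤ t ∧ t ∈ daisySet X ∧ S = cubeSet X b t ∧
      ({j | b j ≠ t j} : Finset (Fin n)).card = k := by
  classical
  set f : (Fin k → Bool) → (Fin n → Bool) := fun v => (e.symm v).1.1 with hf
  have hfinj : Function.Injective f := by
    intro v w h
    exact e.symm.injective (Subtype.ext (Subtype.ext h))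
  have hfadj : ∀ v w : Fin k → Bool, hammingDist (f v) (f w) = 1 ↔ hammingDist v w = 1 := by
    intro v w
    exact e.symm.map_rel_iff
  have hfdaisy : ∀ v, f v ∈ daisySet X := fun v => (e.symm v).1.2
  have hSrange : ∀ w : ↥(daisySet X), w ∈ S ↔ ∃ v, f v = w.1 := by
    intro w
    constructor
    · intro hw
      exact ⟨e ⟨w, hw⟩, by rw [hf]; exact congrArg (fun z => z.1.1) (e.symm_apply_apply ⟨w, hw⟩)⟩
    · rintro ⟨v, hv⟩
      have : (e.symm v).1 = w := Subtype.ext hv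
      rw [← this]
      exact (e.symm v).2
  set a : Fin n → Bool := f (fun _ => false) with ha
  set ei : Fin k → (Fin k → Bool) := fun i i' => decide (i' = i) with hei
  have ham0ei : ∀ i, hammingDist (fun _ => false : Fin k → Bool) (ei i) = 1 := by
    intro i
    have : ({i' | (fun _ => false : Fin k → Bool) i' ≠ ei i i'} : Finset (Fin k)) = {i} := by
      ext i'
      simp [hei, eq_comm]
    rw [hammingDist, this, card_singleton]
  have hcex : ∀ i : Fin k, ∃ γ : Fin n, ({j | a j ≠ f (ei i) j} : Finset (Fin n)) = {γ} := by
    intro i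
    apply card_eq_one.mp
    exact (hfadj _ _).mpr (ham0ei i)
  choose c hcspec using hcex
  have f_ei : ∀ (i : Fin k) (j : Fin n), f (ei i) j = if j = c i then !(a j) else a j := by
    intro i j
    by_cases hj : j = c i
    · rw [if_pos hj]
      have hmem : j ∈ ({j' | a j' ≠ f (ei i) j'} : Finset (Fin n)) := by
        rw [hcspec i]; simp [hj]
      have hne : a j ≠ f (ei i) j := by simpa using hmem
      exact bool_ne_iff hne
    · rw [if_neg hj]
      by_contra h
      have : j ∈ ({j | a j ≠ f (ei i) j} : Finset (Fin n)) := by simp [Ne.symm h]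
      rw [hcspec i, mem_singleton] at this
      exact hj this
  have cinj : Function.Injective c := by
    intro i i' h
    have : f (ei i) = f (ei i') := by
      funext j
      rw [f_ei, f_ei, h]
    have hee : ei i = ei i' := hfinj this
    have := congrFun hee i
    simpa [hei] using this
  set g : (Fin k → Bool) → (Fin n → Bool) :=
    fun v j => if ∃ i, c i = j ∧ v i = true then !(a j) else a j with hg
  have g_at_c : ∀ (v : Fin k → Bool) (i : Fin k),
      g v (c i) = if v i = true then !(a (c i)) else a (c i) := by
    intro v i
    by_cases hv : v i = true
    · rw [if_pos hv]
      simp only [hg]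
      rw [if_pos ⟨i, rfl, hv⟩]
    · rw [if_neg hv]
      simp only [hg]
      rw [if_neg]
      rintro ⟨i', hci', hvi'⟩
      exact hv (cinj hci' ▸ hvi')
  have g_off : ∀ (v : Fin k → Bool) (j : Fin n), (∀ i, c i ≠ j) → g v j = a j := by
    intro v j hj
    simp only [hg]
    rw [if_neg]
    rintro ⟨i, hci, -⟩
    exact hj i hci
  have ham_g : ∀ v w : Fin k → Bool, hammingDist (g v) (g w) = hammingDist v w := by
    intro v w
    have hset : ({j | g v j ≠ g w j} : Finset (Fin n))
        = ({i | v i ≠ w i} : Finset (Fin k)).image c := by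
      ext j
      simp only [mem_filter, mem_univ, true_and, mem_image]
      constructor
      · intro hj
        by_cases hex : ∃ i, c i = j
        · obtain ⟨i, rfl⟩ := hex
          refine ⟨i, ?_, rfl⟩
          rw [g_at_c, g_at_c] at hj
          intro h
          rw [h] at hj
          exact hj rfl
        · push_neg at hex
          rw [g_off v j hex, g_off w j hex] at hj
          exact absurd rfl hj
      · rintro ⟨i, hi, rfl⟩
        rw [g_at_c, g_at_c]
        cases hvi : v i <;> cases hwi : w i <;> simp_all
    rw [hammingDist, hammingDist, hset, card_image_of_injective _ cinj]
  have ginj : Function.Injective g := by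
    intro v w h
    have : hammingDist v w = 0 := by
      rw [← ham_g, h, hammingDist_self]
    exact hammingDist_eq_zero.mp this
  have g_zero : g (fun _ => false) = a := by
    funext j
    simp only [hg]
    rw [if_neg]
    rintro ⟨i, -, hvi⟩
    simp at hvi
  have g_ei : ∀ i, g (ei i) = f (ei i) := by
    intro i
    funext j
    rw [f_ei]
    by_cases hj : j = c i
    · rw [if_pos hj, hg]
      simp only []
      rw [if_pos ⟨i, hj.symm, by simp [hei]⟩]
    · rw [if_neg hj, hg]
      simp only []
      rw [if_neg]
      rintro ⟨i', hci', hvi'⟩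
      simp only [hei, decide_eq_true_eq] at hvi'
      subst hvi'
      exact hj hci'.symm
  have main : ∀ (m : ℕ) (v : Fin k → Bool), ({i | v i = true} : Finset (Fin k)).card = m →
      f v = g v := by
    intro m
    induction m using Nat.strong_induction_on with
    | _ m IH =>
      intro v hv
      match m, hv with
      | 0, hv =>
        have : v = fun _ => false := by
          funext i
          rw [card_eq_zero] at hv
          have : i ∉ ({i | v i = true} : Finset (Fin k)) := by rw [hv]; exact notMem_empty _
          simpa using this
        rw [this, g_zero, ha]
      | 1, hv =>
        obtain ⟨i, hi⟩ := card_eq_one.mp hv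
        have : v = ei i := by
          funext i'
          have : v i' = true ↔ i' = i := by
            constructor
            · intro h
              have : i' ∈ ({i | v i = true} : Finset (Fin k)) := by simp [h]
              rwa [hi, mem_singleton] at this
            · rintro rfl
              have h2 : i' ∈ ({i | v i = true} : Finset (Fin k)) := by
                rw [hi]; exact mem_singleton_self _
              simpa using h2
          simp only [hei]
          cases h : v i' with
          | true => simp [this.mp h]
          | false =>
            symm
            rw [decide_eq_false_iff_not]
            intro he
            rw [← this] at he
            rw [h] at he
            exact Bool.false_ne_true he
        rw [this, g_ei]
      | (m + 2), hv =>
        obtain ⟨i, hi, i', hi', hii'⟩ := one_lt_card.mp (by omega :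
          1 < ({i | v i = true} : Finset (Fin k)).card)
        simp only [mem_filter, mem_univ, true_and] at hi hi'
        set v1 := Function.update v i false with hv1
        set v2 := Function.update v i' false with hv2
        set v12 := Function.update v1 i' false with hv12
        have hcard1 : ({i0 | v1 i0 = true} : Finset (Fin k)).card = m + 1 := by
          rw [hv1, filter_update_false, card_erase_of_mem (by simp [hi]), hv]
          omega
        have hcard2 : ({i0 | v2 i0 = true} : Finset (Fin k)).card = m + 1 := by
          rw [hv2, filter_update_false, card_erase_of_mem (by simp [hi']), hv]
          omega
        have hcard12 : ({i0 | v12 i0 = true} : Finset (Fin k)).card = m := by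
          have hmem : i' ∈ ({i0 | v1 i0 = true} : Finset (Fin k)) := by
            simp only [mem_filter, mem_univ, true_and, hv1]
            rw [Function.update_of_ne (Ne.symm hii')]
            exact hi'
          rw [hv12, filter_update_false, card_erase_of_mem hmem, hcard1]
          omega
        have if1 : f v1 = g v1 := IH (m+1) (by omega) v1 hcard1
        have if2 : f v2 = g v2 := IH (m+1) (by omega) v2 hcard2
        have if12 : f v12 = g v12 := IH m (by omega) v12 hcard12
        have hv12eq : v12 = Function.update v2 i false := by
          funext i0
          simp only [hv12, hv1, hv2, Function.update]
          by_cases h0 : i0 = i <;> by_cases h0' : i0 = i' <;> simp [h0, h0']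
        have hamvv1 : hammingDist v v1 = 1 := ham_update_ne v i false (by simp [hi])
        have hamvv2 : hammingDist v v2 = 1 := ham_update_ne v i' false (by simp [hi'])
        have hamv1v12 : hammingDist v12 v1 = 1 := by
          rw [hammingDist_comm]
          exact ham_update_ne v1 i' false
            (by rw [hv1, Function.update_of_ne (Ne.symm hii')]; simp [hi'])
        have hamv2v12 : hammingDist v12 v2 = 1 := by
          rw [hammingDist_comm, hv12eq]
          exact ham_update_ne v2 i false
            (by rw [hv2, Function.update_of_ne hii']; simp [hi])
        have hamv1v2 : hammingDist v1 v2 = 2 := by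
          have hset : ({i0 | v1 i0 ≠ v2 i0} : Finset (Fin k)) = {i, i'} := by
            ext i0
            by_cases h0 : i0 = i
            · subst h0
              simp only [mem_filter, mem_univ, true_and, mem_insert, mem_singleton]
              rw [hv1, hv2, Function.update_self, Function.update_of_ne hii']
              simp [hi]
            · by_cases h0' : i0 = i'
              · subst h0'
                simp only [mem_filter, mem_univ, true_and, mem_insert, mem_singleton]
                rw [hv1, hv2, Function.update_self, Function.update_of_ne (Ne.symm hii')]
                simp [hi']
              · simp only [mem_filter, mem_univ, true_and, mem_insert, mem_singleton]
                rw [hv1, hv2, Function.update_of_ne h0, Function.update_of_ne h0']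
                simp [h0, h0']
          rw [hammingDist, hset, card_insert_of_notMem (by simp [hii']), card_singleton]
        have hvne12 : v ≠ v12 := by
          intro h
          have := congrFun h i
          rw [hv12, hv1, Function.update_of_ne hii', Function.update_self] at this
          rw [hi] at this
          exact Bool.true_eq_false.mp this
        have hrr' : g v ≠ g v12 := fun h => hvne12 (ginj h)
        have hcn := cn_two
          (p := g v1) (q := g v2) (r := g v) (r' := g v12) (s := f v)
          (by rw [ham_g]; exact hamv1v2)
          (by rw [ham_g]; exact hamvv1)
          (by rw [ham_g]; exact hamvv2)
          (by rw [ham_g]; exact hamv1v12)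
          (by rw [ham_g]; exact hamv2v12)
          (by rw [← if1]; exact (hfadj _ _).mpr hamvv1)
          (by rw [← if2]; exact (hfadj _ _).mpr hamvv2)
          hrr'
        rcases hcn with h | h
        · exact h
        · rw [← if12] at h
          exact absurd (hfinj h) hvne12
  have f_eq_g : ∀ v, f v = g v := fun v => main _ v rfl
  -- now define b and t
  set b : Fin n → Bool := fun j => if ∃ i, c i = j then false else a j with hb
  set t : Fin n → Bool := fun j => if ∃ i, c i = j then true else a j with htdef
  have hbt : b ≤ t := by
    intro j
    simp only [hb, htdef]
    by_cases hex : ∃ i, c i = j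
    · rw [if_pos hex, if_pos hex]; exact Bool.false_le _
    · rw [if_neg hex, if_neg hex]
  have range_g : ∀ w : Fin n → Bool, (∃ v, g v = w) ↔ (b ≤ w ∧ w ≤ t) := by
    intro w
    constructor
    · rintro ⟨v, rfl⟩
      constructor
      · intro j
        simp only [hb]
        by_cases hex : ∃ i, c i = j
        · rw [if_pos hex]; exact Bool.false_le _
        · rw [if_neg hex]
          push_neg at hex
          rw [g_off v j hex]
      · intro j
        simp only [htdef]
        by_cases hex : ∃ i, c i = j
        · rw [if_pos hex]; exact Bool.le_true _
        · rw [if_neg hex]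
          push_neg at hex
          rw [g_off v j hex]
    · rintro ⟨hbw, hwt⟩
      refine ⟨fun i => xor (w (c i)) (a (c i)), ?_⟩
      funext j
      by_cases hex : ∃ i, c i = j
      · obtain ⟨i, rfl⟩ := hex
        rw [g_at_c]
        cases hw : w (c i) <;> cases haj : a (c i) <;> simp [hw, haj]
      · push_neg at hex
        rw [g_off _ j hex]
        have h1 := hbw j
        have h2 := hwt j
        simp only [hb, htdef, if_neg (not_exists.mpr hex)] at h1 h2
        exact le_antisymm h1 h2
  have hScube : S = cubeSet X b t := by
    ext w
    rw [hSrange w]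
    show (∃ v, f v = w.1) ↔ (b ≤ w.1 ∧ w.1 ≤ t)
    rw [← range_g w.1]
    constructor
    · rintro ⟨v, hv⟩; exact ⟨v, by rw [← f_eq_g]; exact hv⟩
    · rintro ⟨v, hv⟩; exact ⟨v, by rw [f_eq_g]; exact hv⟩
  have htd : t ∈ daisySet X := by
    obtain ⟨v, hv⟩ := (range_g t).mpr ⟨hbt, le_refl t⟩
    rw [← f_eq_g] at hv
    rw [← hv]
    exact hfdaisy v
  refine ⟨b, t, hbt, htd, hScube, ?_⟩
  have hset : ({j | b j ≠ t j} : Finset (Fin n)) = (univ : Finset (Fin k)).image c := by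
    ext j
    simp only [mem_filter, mem_univ, true_and, mem_image, hb, htdef]
    by_cases hex : ∃ i, c i = j
    · rw [if_pos hex, if_pos hex]
      simpa using hex
    · rw [if_neg hex, if_neg hex]
      exact iff_of_false (fun h => h rfl) (by simpa using hex)
  rw [hset, card_image_of_injective _ cinj, card_univ, Fintype.card_fin]

lemma distToSet_cube (u : ↥(daisySet X)) (b t : Fin n → Bool) (hbt : b ≤ t)
    (ht : t ∈ daisySet X) :
    distToSet ((Qcube n).induce (daisySet X)) u (cubeSet X b t)
      = ({j | (u.1 j = true ∧ t j = false) ∨ (u.1 j = false ∧ b j = true)} :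
          Finset (Fin n)).card := by
  classical
  set wstar : Fin n → Bool := fun j => (u.1 j && t j) || b j with hws
  have hwt : wstar ≤ t := by
    intro j
    have hb := hbt j
    simp only [hws]
    cases hbj : b j <;> cases htj : t j <;> cases huj : u.1 j <;> simp_all
  have hbw : b ≤ wstar := by
    intro j
    simp only [hws]
    cases hbj : b j <;> simp_all
  have hwd : wstar ∈ daisySet X := daisy_down hwt ht
  have hmem : (⟨wstar, hwd⟩ : ↥(daisySet X)) ∈ cubeSet X b t := ⟨hbw, hwt⟩
  have hamN : hammingDist u.1 wstar
      = ({j | (u.1 j = true ∧ t j = false) ∨ (u.1 j = false ∧ b j = true)} :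
          Finset (Fin n)).card := by
    rw [hammingDist]
    congr 1
    ext j
    have hb : b j = true → t j = true := Bool.le_iff_imp.mp (hbt j)
    simp only [mem_filter, mem_univ, true_and, hws]
    cases hbj : b j <;> cases htj : t j <;> cases huj : u.1 j <;> simp_all
  have hlow : ∀ w : ↥(daisySet X), w ∈ cubeSet X b t →
      ({j | (u.1 j = true ∧ t j = false) ∨ (u.1 j = false ∧ b j = true)} :
          Finset (Fin n)).card ≤ hammingDist u.1 w.1 := by
    intro w hw
    rw [hammingDist]
    apply card_le_card
    intro j hj
    simp only [mem_filter, mem_univ, true_and] at hj ⊢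
    have h1 := hw.1 j
    have h2 := hw.2 j
    rcases hj with ⟨hu, htj⟩ | ⟨hu, hbj⟩
    · have hw2 : w.1 j = false := le_antisymm (htj ▸ h2) (Bool.false_le _)
      rw [hu, hw2]
      simp
    · have hw1 : w.1 j = true := le_antisymm (Bool.le_true _) (hbj ▸ h1)
      rw [hu, hw1]
      simp
  rw [distToSet]
  apply le_antisymm
  · apply Nat.sInf_le
    refine ⟨⟨wstar, hwd⟩, hmem, ?_⟩
    rw [dist_eq_hamming]
    exact hamN
  · apply le_csInf
    · exact ⟨_, ⟨⟨wstar, hwd⟩, hmem, rfl⟩⟩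
    · rintro m ⟨w, hw, rfl⟩
      rw [dist_eq_hamming]
      exact hlow w hw

lemma count_eq (u : ↥(daisySet X)) (k d : ℕ) :
    distCubeCount ((Qcube n).induce (daisySet X)) u k d
      = Set.ncard {p : (Fin n → Bool) × (Fin n → Bool) | p.1 ≤ p.2 ∧ p.2 ∈ daisySet X ∧
          ({j | p.1 j ≠ p.2 j} : Finset (Fin n)).card = k ∧
          ({j | (u.1 j = true ∧ p.2 j = false) ∨ (u.1 j = false ∧ p.1 j = true)} :
            Finset (Fin n)).card = d} := by
  classical
  rw [distCubeCount]
  have hset : {S : Set ↥(daisySet X) |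
        Nonempty ((((Qcube n).induce (daisySet X)).induce S) ≃g Qcube k) ∧
        distToSet ((Qcube n).induce (daisySet X)) u S = d}
      = (fun p : (Fin n → Bool) × (Fin n → Bool) => cubeSet X p.1 p.2) ''
        {p | p.1 ≤ p.2 ∧ p.2 ∈ daisySet X ∧
          ({j | p.1 j ≠ p.2 j} : Finset (Fin n)).card = k ∧
          ({j | (u.1 j = true ∧ p.2 j = false) ∨ (u.1 j = false ∧ p.1 j = true)} :
            Finset (Fin n)).card = d} := by
    ext S
    constructor
    · rintro ⟨⟨e⟩, hd⟩
      obtain ⟨b, t, hbt, ht, hS, hk⟩ := induced_cube_interval e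
      refine ⟨(b, t), ⟨hbt, ht, hk, ?_⟩, hS.symm⟩
      rw [hS, distToSet_cube u b t hbt ht] at hd
      exact hd
    · rintro ⟨⟨b, t⟩, ⟨hbt, ht, hk, hd⟩, rfl⟩
      constructor
      · have := cube_iso (X := X) b t hbt ht
        rw [show (Dbt b t).card = k from hk] at this
        exact this
      · rw [distToSet_cube u b t hbt ht]
        exact hd
  rw [hset]
  apply Set.ncard_image_of_injOn
  rintro ⟨b, t⟩ ⟨hbt, ht, -, -⟩ ⟨b', t'⟩ ⟨hbt', ht', -, -⟩ heq
  simp only [] at heq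
  have hbmem : (⟨b, daisy_down hbt ht⟩ : ↥(daisySet X)) ∈ cubeSet X b t := ⟨le_refl b, hbt⟩
  have hbmem' : (⟨b', daisy_down hbt' ht'⟩ : ↥(daisySet X)) ∈ cubeSet X b' t' :=
    ⟨le_refl b', hbt'⟩
  have htmem : (⟨t, ht⟩ : ↥(daisySet X)) ∈ cubeSet X b t := ⟨hbt, le_refl t⟩
  have htmem' : (⟨t', ht'⟩ : ↥(daisySet X)) ∈ cubeSet X b' t' := ⟨hbt', le_refl t'⟩
  have h1 : b' ≤ b := (heq ▸ hbmem).1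
  have h2 : b ≤ b' := (heq ▸ hbmem' : _ ∈ cubeSet X b t).1
  have h3 : t ≤ t' := (heq ▸ htmem).2
  have h4 : t' ≤ t := (heq ▸ htmem' : _ ∈ cubeSet X b t).2
  exact Prod.ext (le_antisymm h2 h1) (le_antisymm h3 h4)


noncomputable def Fco (x : ℝ) (uu bb tt : Bool) : ℝ :=
  (if bb ≠ tt then x else 1) *
    (if (uu = true ∧ tt = false) ∨ (uu = false ∧ bb = true) then -x else 1)

noncomputable def Gco (x : ℝ) (uu tt : Bool) : ℝ :=
  if tt = true then x + (if uu = true then 1 else -x) else if uu = true then -x else 1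

end DaisyProof

open DaisyProof Finset in
theorem daisy_cube_distCubePolynomial_at_neg (n : ℕ) (X : Set (Fin n → Bool))
    (u : ↥(daisySet X)) (x : ℝ) :
    ∑ k ∈ Finset.range (2 ^ n + 1), ∑ d ∈ Finset.range (2 ^ n + 1),
      (distCubeCount ((Qcube n).induce (daisySet X)) u k d : ℝ) * x ^ k * (-x) ^ d = 1 := by
  classical
  set kfun : (Fin n → Bool) × (Fin n → Bool) → ℕ :=
    fun p => ({j | p.1 j ≠ p.2 j} : Finset (Fin n)).card with hkfun
  set dfun : (Fin n → Bool) × (Fin n → Bool) → ℕ :=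
    fun p => ({j | (u.1 j = true ∧ p.2 j = false) ∨ (u.1 j = false ∧ p.1 j = true)} :
      Finset (Fin n)).card with hdfun
  set P : Finset ((Fin n → Bool) × (Fin n → Bool)) :=
    univ.filter (fun p => p.1 ≤ p.2 ∧ p.2 ∈ daisySet X) with hP
  -- each coefficient as a sum over pairs
  have hcount : ∀ k d, (distCubeCount ((Qcube n).induce (daisySet X)) u k d : ℝ)
        * x ^ k * (-x) ^ d
      = ∑ p ∈ (P.filter (fun p => kfun p = k)).filter (fun p => dfun p = d),
          x ^ kfun p * (-x) ^ dfun p := by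
    intro k d
    have h1 : distCubeCount ((Qcube n).induce (daisySet X)) u k d
        = ((P.filter (fun p => kfun p = k)).filter (fun p => dfun p = d)).card := by
      rw [count_eq, ← Set.ncard_coe_finset]
      congr 1
      ext p
      simp only [hP, hkfun, hdfun, coe_filter, Set.mem_setOf_eq, mem_filter, mem_univ,
        true_and]
      tauto
    have h2 : ∀ p ∈ (P.filter (fun p => kfun p = k)).filter (fun p => dfun p = d),
        x ^ kfun p * (-x) ^ dfun p = x ^ k * (-x) ^ d := by
      intro p hp
      simp only [mem_filter] at hp
      rw [hp.1.2, hp.2]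
    rw [Finset.sum_congr rfl h2, Finset.sum_const, nsmul_eq_mul, h1, mul_assoc]
  -- helper : sum over down-sets is a product
  have hinner : ∀ (t : Fin n → Bool) (F : Fin n → Bool → ℝ),
      ∑ b ∈ univ.filter (fun b : Fin n → Bool => b ≤ t), ∏ j, F j (b j)
        = ∏ j, ∑ β ∈ (if t j = true then (univ : Finset Bool) else ({false} : Finset Bool)),
            F j β := by
    intro t F
    rw [Finset.prod_univ_sum]
    congr 1
    ext b
    simp only [mem_filter, mem_univ, true_and, Fintype.mem_piFinset]
    rw [Pi.le_def]
    apply forall_congr'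
    intro j
    cases htj : t j <;> cases hbj : b j <;> simp
  -- the power term as a product over coordinates
  have hFprod : ∀ p : (Fin n → Bool) × (Fin n → Bool),
      x ^ kfun p * (-x) ^ dfun p = ∏ j, Fco x (u.1 j) (p.1 j) (p.2 j) := by
    intro p
    rw [hkfun, hdfun]
    calc x ^ ({j | p.1 j ≠ p.2 j} : Finset (Fin n)).card
          * (-x) ^ ({j | (u.1 j = true ∧ p.2 j = false) ∨ (u.1 j = false ∧ p.1 j = true)} :
              Finset (Fin n)).card
        = (∏ j ∈ ({j | p.1 j ≠ p.2 j} : Finset (Fin n)), x)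
          * (∏ j ∈ ({j | (u.1 j = true ∧ p.2 j = false) ∨ (u.1 j = false ∧ p.1 j = true)} :
              Finset (Fin n)), -x) := by rw [prod_const, prod_const]
      _ = (∏ j, if p.1 j ≠ p.2 j then x else 1)
          * (∏ j, if (u.1 j = true ∧ p.2 j = false) ∨ (u.1 j = false ∧ p.1 j = true)
              then -x else 1) := by rw [prod_filter, prod_filter]
      _ = ∏ j, Fco x (u.1 j) (p.1 j) (p.2 j) := by
            rw [← prod_mul_distrib]
            rfl
  -- assemble
  calc ∑ k ∈ Finset.range (2 ^ n + 1), ∑ d ∈ Finset.range (2 ^ n + 1),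
      (distCubeCount ((Qcube n).induce (daisySet X)) u k d : ℝ) * x ^ k * (-x) ^ d
      = ∑ k ∈ Finset.range (2 ^ n + 1), ∑ d ∈ Finset.range (2 ^ n + 1),
          ∑ p ∈ (P.filter (fun p => kfun p = k)).filter (fun p => dfun p = d),
            x ^ kfun p * (-x) ^ dfun p :=
        Finset.sum_congr rfl fun k _ => Finset.sum_congr rfl fun d _ => hcount k d
    _ = ∑ k ∈ Finset.range (2 ^ n + 1), ∑ p ∈ P.filter (fun p => kfun p = k),
          x ^ kfun p * (-x) ^ dfun p := by
        apply Finset.sum_congr rfl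
        intro k _
        apply Finset.sum_fiberwise_of_maps_to
        intro p _
        rw [mem_range]
        calc dfun p ≤ (univ : Finset (Fin n)).card := card_filter_le _ _
          _ = n := by rw [card_univ, Fintype.card_fin]
          _ < 2 ^ n + 1 := Nat.lt_succ_of_le (Nat.le_of_lt Nat.lt_two_pow_self)
    _ = ∑ p ∈ P, x ^ kfun p * (-x) ^ dfun p := by
        apply Finset.sum_fiberwise_of_maps_to
        intro p _
        rw [mem_range]
        calc kfun p ≤ (univ : Finset (Fin n)).card := card_filter_le _ _
          _ = n := by rw [card_univ, Fintype.card_fin]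
          _ < 2 ^ n + 1 := Nat.lt_succ_of_le (Nat.le_of_lt Nat.lt_two_pow_self)
    _ = ∑ p ∈ P, ∏ j, Fco x (u.1 j) (p.1 j) (p.2 j) :=
        Finset.sum_congr rfl fun p _ => hFprod p
    _ = ∑ t ∈ univ.filter (fun t => t ∈ daisySet X),
          ∑ b ∈ univ.filter (fun b : Fin n → Bool => b ≤ t),
            ∏ j, Fco x (u.1 j) (b j) (t j) := by
        apply Finset.sum_finset_product_right
        intro p
        simp only [hP, mem_filter, mem_univ, true_and]
        tauto
    _ = ∑ t ∈ univ.filter (fun t => t ∈ daisySet X), ∏ j, Gco x (u.1 j) (t j) := by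
        apply Finset.sum_congr rfl
        intro t _
        rw [hinner t (fun j β => Fco x (u.1 j) β (t j))]
        apply Finset.prod_congr rfl
        intro j _
        cases htj : t j <;> cases huj : u.1 j <;>
          simp [Fco, Gco, Fintype.sum_bool] <;> ring
    _ = ∑ t ∈ univ.filter (fun t : Fin n → Bool => t ≤ u.1), ∏ j, Gco x (u.1 j) (t j) := by
        symm
        apply Finset.sum_subset
        · intro t htle
          simp only [mem_filter, mem_univ, true_and] at htle ⊢
          exact daisy_down htle u.2
        · intro t _ htnle
          simp only [mem_filter, mem_univ, true_and] at htnle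
          rw [Pi.le_def] at htnle
          push_neg at htnle
          obtain ⟨j, hj⟩ := htnle
          have htj : t j = true ∧ u.1 j = false := by
            cases ht1 : t j <;> cases hu1 : u.1 j <;> rw [ht1, hu1] at hj
            · exact absurd hj (by decide)
            · exact absurd hj (by decide)
            · exact ⟨rfl, rfl⟩
            · exact absurd hj (by decide)
          apply Finset.prod_eq_zero (mem_univ j)
          rw [Gco, if_pos htj.1]
          rw [htj.2]
          simp
    _ = ∏ j, ∑ τ ∈ (if u.1 j = true then (univ : Finset Bool) else ({false} : Finset Bool)),
          Gco x (u.1 j) τ := hinner u.1 (fun j τ => Gco x (u.1 j) τ)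
    _ = 1 := by
        apply Finset.prod_eq_one
        intro j _
        cases huj : u.1 j
        · simp [Gco]
        · simp [Gco, Fintype.sum_bool]
end

section
/- Let u and b be vertices of the n-cube Q_n and let G be the subgraph of Q_n induced by the interval I_{Q_n}(0^n, b). Then D_{G,u}(x, −x) = (−x)^{d(u,G)}, where d(u,G) = min_{v ∈ V(G)} d_{Q_n}(u,v) and D_{G,u} is the distance cube polynomial counting induced subcubes of G according to their dimension and their distance from u in Q_n. -/
open Finset

lemma hamming_update {n : ℕ} (w : Fin n → Bool) (i : Fin n) (c : Bool) (h : w i ≠ c) :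
    hammingDist w (Function.update w i c) = 1 := by
  unfold hammingDist
  rw [Finset.card_eq_one]
  refine ⟨i, ?_⟩
  ext j
  simp only [Finset.mem_filter, Finset.mem_univ, true_and, Finset.mem_singleton]
  constructor
  · intro hj
    by_contra hne
    rw [Function.update_of_ne hne] at hj
    exact hj rfl
  · rintro rfl; rw [Function.update_self]; exact h

lemma hamming_one_flip {n : ℕ} {w w' : Fin n → Bool} (h : hammingDist w w' = 1) :
    ∃ i, w i ≠ w' i ∧ w' = Function.update w i (w' i) := by
  unfold hammingDist at h
  rw [Finset.card_eq_one] at h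
  obtain ⟨i, hi⟩ := h
  have hmem : ∀ j, w j ≠ w' j ↔ j = i := by
    intro j
    rw [← Finset.mem_singleton, ← hi]
    simp
  refine ⟨i, (hmem i).mpr rfl, funext fun j => ?_⟩
  by_cases hj : j = i
  · subst hj; rw [Function.update_self]
  · rw [Function.update_of_ne hj]
    by_contra hne
    exact hj ((hmem j).mp (Ne.symm hne))

def bflip {n : ℕ} (w : Fin n → Bool) (i : Fin n) : Fin n → Bool :=
  Function.update w i (!(w i))

lemma bflip_apply_same {n : ℕ} (w : Fin n → Bool) (i : Fin n) : bflip w i i = !(w i) := by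
  simp [bflip]

lemma bflip_apply_ne {n : ℕ} (w : Fin n → Bool) {i j : Fin n} (h : j ≠ i) : bflip w i j = w j := by
  simp [bflip, Function.update_of_ne h]

lemma bflip_bflip {n : ℕ} (w : Fin n → Bool) (i : Fin n) : bflip (bflip w i) i = w := by
  funext j
  by_cases h : j = i
  · subst h; simp [bflip_apply_same]
  · rw [bflip_apply_ne _ h, bflip_apply_ne _ h]

lemma bflip_dist {n : ℕ} (w : Fin n → Bool) (i : Fin n) : hammingDist w (bflip w i) = 1 :=
  hamming_update w i (!(w i)) (by simp)

lemma hof_prime {n : ℕ} {w w' : Fin n → Bool} (h : hammingDist w w' = 1) :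
    ∃ i, w' = bflip w i := by
  obtain ⟨i, hne, heq⟩ := hamming_one_flip h
  have hv : w' i = !(w i) := by clear heq h; cases hw : w i <;> cases hw' : w' i <;> simp_all
  rw [hv] at heq
  exact ⟨i, by unfold bflip; exact heq⟩

lemma three_flips {n : ℕ} (w : Fin n → Bool) {a b c : Fin n}
    (hab : a ≠ b) (hac : a ≠ c) (hbc : b ≠ c) :
    hammingDist (bflip w a) (bflip (bflip w b) c) = 3 := by
  unfold hammingDist
  have : (Finset.univ.filter (fun j => bflip w a j ≠ bflip (bflip w b) c j)) = {a, b, c} := by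
    ext j
    simp only [Finset.mem_filter, Finset.mem_univ, true_and, Finset.mem_insert,
      Finset.mem_singleton]
    by_cases hja : j = a
    · subst hja
      rw [bflip_apply_same, bflip_apply_ne _ hac, bflip_apply_ne _ hab]
      simp
    · by_cases hjb : j = b
      · subst hjb
        rw [bflip_apply_ne _ (Ne.symm hab), bflip_apply_ne _ hbc, bflip_apply_same]
        simp [hja]
      · by_cases hjc : j = c
        · subst hjc
          rw [bflip_apply_ne _ (Ne.symm hac), bflip_apply_same,
            bflip_apply_ne _ (Ne.symm hbc)]
          simp [hja, hjb]
        · rw [bflip_apply_ne _ hja, bflip_apply_ne _ hjc, bflip_apply_ne _ hjb]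
          simp [hja, hjb, hjc]
  rw [this]
  rw [Finset.card_insert_of_notMem (by simp [hab, hac]),
    Finset.card_insert_of_notMem (by simp [hbc])]
  simp

lemma hamming_update_lt {n : ℕ} {u v : Fin n → Bool} {i : Fin n} (c : Bool) (hc : c = v i)
    (h : u i ≠ c) : hammingDist (Function.update u i c) v + 1 = hammingDist u v := by
  subst hc
  unfold hammingDist
  have hset : (Finset.univ.filter (fun j => Function.update u i (v i) j ≠ v j)) =
      (Finset.univ.filter (fun j => u j ≠ v j)).erase i := by
    ext j
    simp only [Finset.mem_filter, Finset.mem_univ, true_and, Finset.mem_erase]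
    by_cases hj : j = i
    · subst hj; simp [Function.update_self]
    · simp [Function.update_of_ne hj, hj]
  have hmem : i ∈ Finset.univ.filter (fun j => u j ≠ v j) := by simp [h]
  rw [hset, Finset.card_erase_of_mem hmem]
  have : 0 < (Finset.univ.filter (fun j => u j ≠ v j)).card := Finset.card_pos.mpr ⟨i, hmem⟩
  omega

lemma step_lemma {n : ℕ} {p q r s : Fin n → Bool} {i0 : Fin n}
    (hpq : hammingDist p q = 1) (hrs : hammingDist r s = 1) (hpr : hammingDist p r = 1)
    (hq : q ≠ r) (hps : p ≠ s) (hs : s = bflip q i0) :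
    r = bflip p i0 := by
  obtain ⟨i, hi⟩ := hof_prime hpr
  obtain ⟨m0, hm0⟩ := hof_prime hpq
  by_cases hii0 : i = i0
  · subst hii0; exact hi
  exfalso
  by_cases hmi : m0 = i
  · exact hq (by rw [hm0, hi, hmi])
  by_cases hmi0 : m0 = i0
  · apply hps
    rw [hs, hm0, hmi0, bflip_bflip]
  · have h3 : hammingDist r s = 3 := by
      rw [hi, hs, hm0]
      exact three_flips p (Ne.symm hmi) hii0 hmi0
    rw [hrs] at h3
    exact absurd h3 (by norm_num)

lemma hamming_eq_sum {n : ℕ} (u w : Fin n → Bool) :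
    hammingDist u w = ∑ i, if u i = w i then 0 else 1 := by
  unfold hammingDist
  rw [Finset.card_filter]
  congr 1
  funext i
  by_cases h : u i = w i <;> simp [h]

lemma hamming_snoc {k : ℕ} (x y : Fin k → Bool) (c c' : Bool) :
    hammingDist (Fin.snoc x c : Fin (k+1) → Bool) (Fin.snoc y c' : Fin (k+1) → Bool) =
      hammingDist x y + if c = c' then 0 else 1 := by
  rw [hamming_eq_sum (n := k+1), hamming_eq_sum x y, Fin.sum_univ_castSucc]
  simp [Fin.snoc_castSucc, Fin.snoc_last]

lemma exists_walk_hamming {n : ℕ} : ∀ (m : ℕ) (u v : Fin n → Bool), hammingDist u v = m →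
    ∃ p : (Qcube n).Walk u v, p.length = m := by
  intro m
  induction m with
  | zero => intro u v h; obtain rfl := hammingDist_eq_zero.mp h; exact ⟨SimpleGraph.Walk.nil, rfl⟩
  | succ m ih =>
    intro u v h
    have hne : u ≠ v := by intro he; subst he; simp [hammingDist_self] at h
    have : ∃ i, u i ≠ v i := by
      by_contra hc
      push_neg at hc
      exact hne (funext hc)
    obtain ⟨i, hi⟩ := this
    set u' := Function.update u i (v i) with hu'
    have hadj : (Qcube n).Adj u u' := hamming_update u i (v i) hi
    have hdist : hammingDist u' v = m := by
      have hset : (Finset.univ.filter (fun j => u' j ≠ v j)) =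
          (Finset.univ.filter (fun j => u j ≠ v j)).erase i := by
        ext j
        simp only [Finset.mem_filter, Finset.mem_univ, true_and, Finset.mem_erase]
        by_cases hj : j = i
        · subst hj; simp [hu', Function.update_self]
        · simp [hu', Function.update_of_ne hj, hj]
      have hcard : (Finset.univ.filter (fun j => u j ≠ v j)).card = m + 1 := h
      have hmem : i ∈ Finset.univ.filter (fun j => u j ≠ v j) := by simp [hi]
      unfold hammingDist
      rw [hset, Finset.card_erase_of_mem hmem, hcard]
      rfl
    obtain ⟨p, hp⟩ := ih u' v hdist
    exact ⟨SimpleGraph.Walk.cons hadj p, by simp [hp]⟩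

lemma hamming_le_walk {n : ℕ} {u v : Fin n → Bool} (p : (Qcube n).Walk u v) :
    hammingDist u v ≤ p.length := by
  induction p with
  | nil => simp [hammingDist_self]
  | cons h p ih =>
    calc hammingDist _ _ ≤ _ + _ := hammingDist_triangle _ _ _
    _ ≤ 1 + p.length := by exact Nat.add_le_add (le_of_eq h) ih
    _ = _ := by simp [SimpleGraph.Walk.length_cons]; ring

lemma Qcube_dist {n : ℕ} (u v : Fin n → Bool) : (Qcube n).dist u v = hammingDist u v := by
  obtain ⟨p, hp⟩ := exists_walk_hamming (hammingDist u v) u v rfl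
  refine le_antisymm (hp ▸ SimpleGraph.dist_le p) ?_
  obtain ⟨q, hq⟩ := SimpleGraph.Reachable.exists_walk_length_eq_dist ⟨p⟩
  exact hq ▸ hamming_le_walk q

def Tg {n : ℕ} (g : Fin n → Option Bool) : Set (Fin n → Bool) :=
  {w | ∀ i c, g i = some c → w i = c}

def wit {n : ℕ} (g : Fin n → Option Bool) (v : Fin n → Bool) : Fin n → Bool :=
  fun i => (g i).getD (v i)

lemma wit_mem {n : ℕ} (g : Fin n → Option Bool) (v : Fin n → Bool) : wit g v ∈ Tg g := by
  intro i c hc; simp [wit, hc]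

lemma Tg_injective {n : ℕ} : Function.Injective (@Tg n) := by
  intro g g' h
  funext i
  match hg : g i, hg' : g' i with
  | none, none => rfl
  | none, some c =>
    exfalso
    have : wit g (fun _ => !c) ∈ Tg g' := h ▸ wit_mem g _
    have := this i c hg'
    simp [wit, hg] at this
  | some c, none =>
    exfalso
    have : wit g' (fun _ => !c) ∈ Tg g := h ▸ wit_mem g' _
    have := this i c hg
    simp [wit, hg'] at this
  | some c, some c' =>
    have h1 : wit g (fun _ => false) ∈ Tg g' := h ▸ wit_mem g _
    have h2 := h1 i c' hg'
    simp [wit, hg] at h2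
    rw [h2]

lemma interval_eq_Tg {n : ℕ} (b : Fin n → Bool) :
    interval (Qcube n) (fun _ => false) b = Tg (fun i => if b i then none else some false) := by
  ext w
  simp only [interval, Set.mem_setOf_eq, Qcube_dist, Tg]
  have key : ∀ i : Fin n, (if (false:Bool) ≠ b i then 1 else 0) ≤
      ((if (false:Bool) ≠ w i then 1 else 0) + (if w i ≠ b i then 1 else 0) : ℕ) := by
    intro i; cases hb : b i <;> cases hw : w i <;> simp
  rw [hammingDist, hammingDist, hammingDist]
  rw [Finset.card_filter, Finset.card_filter, Finset.card_filter, ← Finset.sum_add_distrib]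
  rw [Finset.sum_eq_sum_iff_of_le (fun i _ => key i)]
  constructor
  · intro h i c hc
    have := h i (Finset.mem_univ i)
    by_cases hb : b i
    · simp [hb] at hc
    · simp only [Bool.not_eq_true] at hb
      simp [hb] at hc this ⊢
      subst hc
      cases hw : w i
      · rfl
      · exfalso; rw [hw] at this; simp at this
  · intro h i _
    by_cases hb : b i
    · cases hw : w i <;> simp [hb, hw]
    · simp only [Bool.not_eq_true] at hb
      have := h i false (by simp [hb])
      simp [hb, this]

lemma Tg_subset_iff {n : ℕ} (b : Fin n → Bool) (g : Fin n → Option Bool) :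
    Tg g ⊆ Tg (fun i => if b i then none else some false) ↔
      ∀ i, b i = false → g i = some false := by
  constructor
  · intro hsub i hb
    by_contra hg
    have hmem : wit g (fun _ => true) ∈ Tg g := wit_mem _ _
    have := hsub hmem i false (by simp [hb])
    simp only [wit] at this
    match hgi : g i with
    | none => rw [hgi] at this; simp at this
    | some true => rw [hgi] at this; simp at this
    | some false => exact hg hgi
  · intro h w hw i c hc
    by_cases hb : b i
    · simp [hb] at hc
    · simp only [Bool.not_eq_true] at hb
      simp [hb] at hc
      subst hc
      exact hw i false (h i hb)

lemma hamming_on_Tg {n k : ℕ} {g : Fin n → Option Bool} (σ : Fin k ≃ {i // g i = none})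
    {w w' : Fin n → Bool} (hw : w ∈ Tg g) (hw' : w' ∈ Tg g) :
    hammingDist (fun j => w (σ j).1) (fun j => w' (σ j).1) = hammingDist w w' := by
  unfold hammingDist
  apply Finset.card_bij (fun j _ => (σ j).1)
  · intro j hj
    simp only [Finset.mem_filter, Finset.mem_univ, true_and] at hj ⊢
    exact hj
  · intro j1 h1 j2 h2 he
    exact σ.injective (Subtype.ext he)
  · intro i hi
    simp only [Finset.mem_filter, Finset.mem_univ, true_and] at hi
    have hgi : g i = none := by
      match hg : g i with
      | none => rfl
      | some c => exact absurd ((hw i c hg) ▸ (hw' i c hg).symm) hi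
    exact ⟨σ.symm ⟨i, hgi⟩, by simpa using hi, by simp⟩

lemma face_is_cube {n : ℕ} (g : Fin n → Option Bool) :
    Nonempty ((Qcube n).induce (Tg g) ≃g
      Qcube (Finset.univ.filter (fun i => g i = none)).card) := by
  set k := (Finset.univ.filter (fun i => g i = none)).card with hk
  have hcard : Fintype.card {i // g i = none} = k := by
    rw [Fintype.card_subtype]
  set σ : Fin k ≃ {i // g i = none} := (Fintype.equivFinOfCardEq hcard).symm with hσ
  refine ⟨⟨?_, ?_⟩⟩
  · -- Equiv between ↥(Tg g) and (Fin k → Bool)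
    refine ⟨fun w j => w.1 (σ j).1,
      fun x => ⟨fun i => if h : g i = none then x (σ.symm ⟨i, h⟩) else (g i).getD true, ?_⟩,
      ?_, ?_⟩
    · intro i c hc
      simp [hc]
    · intro w
      ext i
      by_cases h : g i = none
      · simp only [dif_pos h]
        rw [σ.apply_symm_apply]
      · simp only [dif_neg h]
        match hg : g i with
        | none => exact absurd hg h
        | some c => rw [w.2 i c hg]; simp
    · intro x
      funext j
      simp only []
      rw [dif_pos (σ j).2]
      simp
  · intro w w'
    show hammingDist (fun j => w.1 (σ j).1) (fun j => w'.1 (σ j).1) = 1 ↔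
      hammingDist w.1 w'.1 = 1
    rw [hamming_on_Tg σ w.2 w'.2]

lemma cube_embed_face : ∀ {k : ℕ} {n : ℕ} (f : (Fin k → Bool) → (Fin n → Bool)),
    Function.Injective f →
    (∀ x y, hammingDist (f x) (f y) = 1 ↔ hammingDist x y = 1) →
    ∃ g : Fin n → Option Bool, Set.range f = Tg g ∧
      (Finset.univ.filter (fun i => g i = none)).card = k := by
  intro k
  induction k with
  | zero =>
    intro n f hinj hadj
    refine ⟨fun i => some (f (fun _ => false) i), ?_, by simp⟩
    ext w
    constructor
    · rintro ⟨x, rfl⟩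
      have : x = fun _ => false := funext fun j => j.elim0
      subst this
      intro i c hc
      exact Option.some_inj.mp hc
    · intro hw
      refine ⟨fun _ => false, ?_⟩
      funext i
      exact (hw i _ rfl).symm
  | succ k ih =>
    intro n f hinj hadj
    set f0 : (Fin k → Bool) → (Fin n → Bool) := fun x => f (Fin.snoc x false) with hf0
    set f1 : (Fin k → Bool) → (Fin n → Bool) := fun x => f (Fin.snoc x true) with hf1
    have hsnoc_inj : ∀ (c : Bool), Function.Injective (fun x : Fin k → Bool => Fin.snoc x c (α := fun _ => Bool)) := by
      intro c x y h
      funext j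
      have := congrFun h j.castSucc
      simpa [Fin.snoc_castSucc] using this
    have hinj0 : Function.Injective f0 := fun x y h => hsnoc_inj false (hinj h)
    have hinj1 : Function.Injective f1 := fun x y h => hsnoc_inj true (hinj h)
    have hadj0 : ∀ x y, hammingDist (f0 x) (f0 y) = 1 ↔ hammingDist x y = 1 := by
      intro x y
      rw [hf0]
      simp only []
      rw [hadj, hamming_snoc]
      simp
    have hadj1 : ∀ x y, hammingDist (f1 x) (f1 y) = 1 ↔ hammingDist x y = 1 := by
      intro x y
      rw [hf1]
      simp only []
      rw [hadj, hamming_snoc]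
      simp
    obtain ⟨g0, hg0, hk0⟩ := ih f0 hinj0 hadj0
    -- matching distance
    have hmatch : ∀ x, hammingDist (f0 x) (f1 x) = 1 := by
      intro x
      rw [hadj, hamming_snoc]
      simp [hammingDist_self]
    -- cross vertices are distinct
    have hne01 : ∀ x y, f0 x ≠ f1 y := by
      intro x y h
      have := hinj h
      have := congrFun this (Fin.last k)
      simp [Fin.snoc_last] at this
    obtain ⟨i0, hi0⟩ := hof_prime (hmatch (fun _ => false))
    -- key: f1 x = bflip (f0 x) i0 for all x
    have key : ∀ (m : ℕ) (x : Fin k → Bool), hammingDist x (fun _ => false) = m →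
        f1 x = bflip (f0 x) i0 := by
      intro m
      induction m with
      | zero =>
        intro x hx
        obtain rfl := hammingDist_eq_zero.mp hx
        exact hi0
      | succ m ihm =>
        intro x hx
        have hxne : x ≠ fun _ => false := by
          intro h; rw [h, hammingDist_self] at hx; exact absurd hx.symm (by omega)
        have : ∃ i, x i ≠ false := by
          by_contra hc; push_neg at hc; exact hxne (funext hc)
        obtain ⟨i, hi⟩ := this
        have hxy : hammingDist x (Function.update x i false) = 1 :=
          hamming_update x i false hi
        have hym : hammingDist (Function.update x i false) (fun _ => false) = m := by
          have h2 : hammingDist (Function.update x i false) (fun _ => false) + 1 =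
              hammingDist x (fun _ => false) := hamming_update_lt false rfl hi
          omega
        set y := Function.update x i false
        have hkey_y : f1 y = bflip (f0 y) i0 := ihm y hym
        exact step_lemma ((hadj0 x y).mpr hxy) ((hadj1 x y).mpr hxy)
          (hmatch x) (hne01 y x) (hne01 x y) hkey_y
    have key' : ∀ x, f1 x = bflip (f0 x) i0 := fun x => key _ x rfl
    -- g0 i0 is some
    have hg0i0 : ∃ c0, g0 i0 = some c0 := by
      match hg : g0 i0 with
      | some c0 => exact ⟨c0, rfl⟩
      | none =>
        exfalso
        have hmem : bflip (f0 (fun _ => false)) i0 ∈ Tg g0 := by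
          intro i c hc
          have hine : i ≠ i0 := by rintro rfl; rw [hg] at hc; cases hc
          rw [bflip_apply_ne _ hine]
          have : f0 (fun _ => false) ∈ Tg g0 := hg0 ▸ Set.mem_range_self _
          exact this i c hc
        rw [← hg0] at hmem
        obtain ⟨x', hx'⟩ := hmem
        rw [← key' (fun _ => false)] at hx'
        exact hne01 x' (fun _ => false) hx'
    obtain ⟨c0, hc0⟩ := hg0i0
    refine ⟨Function.update g0 i0 none, ?_, ?_⟩
    · ext w
      constructor
      · rintro ⟨z, rfl⟩
        intro i c hc
        have hine : i ≠ i0 := by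
          rintro rfl; rw [Function.update_self] at hc; cases hc
        rw [Function.update_of_ne hine] at hc
        cases hzl : z (Fin.last k)
        · have : f z = f0 (Fin.init z) := by
            rw [hf0]; simp only []; rw [← hzl, Fin.snoc_init_self]
          rw [this]
          have : f0 (Fin.init z) ∈ Tg g0 := hg0 ▸ Set.mem_range_self _
          exact this i c hc
        · have hfz : f z = f1 (Fin.init z) := by
            rw [hf1]; simp only []; rw [← hzl, Fin.snoc_init_self]
          rw [hfz, key' (Fin.init z), bflip_apply_ne _ hine]
          have : f0 (Fin.init z) ∈ Tg g0 := hg0 ▸ Set.mem_range_self _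
          exact this i c hc
      · intro hw
        have hw0mem : Function.update w i0 c0 ∈ Tg g0 := by
          intro i c hc
          by_cases hii : i = i0
          · subst hii
            rw [hc0] at hc
            rw [Function.update_self]
            exact Option.some_inj.mp hc
          · rw [Function.update_of_ne hii]
            exact hw i c (by rw [Function.update_of_ne hii]; exact hc)
        rw [← hg0] at hw0mem
        obtain ⟨x, hx⟩ := hw0mem
        by_cases hwc : w i0 = c0
        · have hweq : w = Function.update w i0 c0 := by
            funext j
            by_cases hj : j = i0
            · subst hj; rw [Function.update_self, hwc]
            · rw [Function.update_of_ne hj]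
          rw [hweq, ← hx]
          exact ⟨Fin.snoc x false, rfl⟩
        · have hweq : w = bflip (Function.update w i0 c0) i0 := by
            funext j
            by_cases hj : j = i0
            · subst hj
              rw [bflip_apply_same, Function.update_self]
              cases hcc : c0 <;> cases hwj : w j <;> simp_all
            · rw [bflip_apply_ne _ hj, Function.update_of_ne hj]
          rw [hweq, ← hx, ← key' x]
          exact ⟨Fin.snoc x true, rfl⟩
    · have hset : (Finset.univ.filter (fun i => Function.update g0 i0 none i = none)) =
          insert i0 (Finset.univ.filter (fun i => g0 i = none)) := by
        ext j
        simp only [Finset.mem_filter, Finset.mem_univ, true_and, Finset.mem_insert]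
        by_cases hj : j = i0
        · subst hj; simp [Function.update_self]
        · simp [Function.update_of_ne hj, hj]
      rw [hset, Finset.card_insert_of_notMem (by simp [hc0]), hk0]

def pen {n : ℕ} (u : Fin n → Bool) (g : Fin n → Option Bool) (i : Fin n) : ℕ :=
  match g i with
  | none => 0
  | some c => if u i = c then 0 else 1

lemma dist_to_Tg {n : ℕ} (u : Fin n → Bool) (g : Fin n → Option Bool) :
    sInf ((Qcube n).dist u '' Tg g) = ∑ i, pen u g i := by
  have hlb : ∀ w ∈ Tg g, (∑ i, pen u g i) ≤ hammingDist u w := by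
    intro w hw
    rw [hamming_eq_sum]
    apply Finset.sum_le_sum
    intro i _
    unfold pen
    match hg : g i with
    | none => simp
    | some c =>
      simp only []
      have := hw i c hg
      by_cases h : u i = c
      · simp [h]
      · have : ¬ (u i = w i) := by rw [this]; exact h
        simp [h, this]
  have hval : hammingDist u (wit g u) = ∑ i, pen u g i := by
    rw [hamming_eq_sum]
    apply Finset.sum_congr rfl
    intro i _
    unfold pen wit
    match hg : g i with
    | none => simp
    | some c => simp only [Option.getD_some]
  apply le_antisymm
  · apply Nat.sInf_le
    exact ⟨wit g u, wit_mem g u, by rw [Qcube_dist, hval]⟩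
  · refine le_csInf ⟨(Qcube n).dist u (wit g u), ⟨wit g u, wit_mem g u, rfl⟩⟩ ?_
    rintro d ⟨w, hw, rfl⟩
    rw [Qcube_dist]
    exact hlb w hw

theorem distCubePolynomial_of_interval_at_neg (n : ℕ) (u b : Fin n → Bool) (x : ℝ) :
    ∑ k ∈ Finset.range (2 ^ n + 1), ∑ d ∈ Finset.range (2 ^ n + 1),
      (Set.ncard {T : Set (Fin n → Bool) |
          T ⊆ interval (Qcube n) (fun _ => false) b ∧
          Nonempty ((Qcube n).induce T ≃g Qcube k) ∧
          sInf ((Qcube n).dist u '' T) = d} : ℝ) * x ^ k * (-x) ^ d =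
    (-x) ^ sInf ((Qcube n).dist u '' interval (Qcube n) (fun _ => false) b) := by
  classical
  set R := Finset.range (2 ^ n + 1) with hR
  set kf : (Fin n → Option Bool) → ℕ := fun g => (Finset.univ.filter (fun i => g i = none)).card
    with hkf
  set df : (Fin n → Option Bool) → ℕ := fun g => ∑ i, pen u g i with hdf
  set valid : (Fin n → Option Bool) → Prop := fun g => ∀ i, b i = false → g i = some false
    with hvalid
  -- step 1: identify the T-sets with g-sets
  have hsets : ∀ k d : ℕ,
      {T : Set (Fin n → Bool) |
          T ⊆ interval (Qcube n) (fun _ => false) b ∧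
          Nonempty ((Qcube n).induce T ≃g Qcube k) ∧
          sInf ((Qcube n).dist u '' T) = d} =
        Tg '' {g | valid g ∧ kf g = k ∧ df g = d} := by
    intro k d
    ext T
    simp only [Set.mem_setOf_eq, Set.mem_image]
    constructor
    · rintro ⟨hsub, ⟨φ⟩, hdist⟩
      set e := φ.symm with he
      set f : (Fin k → Bool) → (Fin n → Bool) := fun z => (e z).1 with hf
      have hinj : Function.Injective f := by
        intro z z' h
        exact e.toEquiv.injective (Subtype.ext h)
      have hadj : ∀ z z', hammingDist (f z) (f z') = 1 ↔ hammingDist z z' = 1 := by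
        intro z z'
        exact e.map_adj_iff
      obtain ⟨g, hrange, hkg⟩ := cube_embed_face f hinj hadj
      have hTrange : Set.range f = T := by
        rw [hf]
        have : Set.range (fun z => (e z).1) = Subtype.val '' Set.range e.toEquiv := by
          rw [← Set.range_comp]; rfl
        rw [this, Equiv.range_eq_univ, Set.image_univ, Subtype.range_coe]
      rw [hTrange] at hrange
      refine ⟨g, ⟨?_, hkg, ?_⟩, hrange.symm⟩
      · simp only [hvalid]
        rw [← Tg_subset_iff b g, ← hrange, ← interval_eq_Tg]
        exact hsub
      · simp only [hdf]
        rw [← dist_to_Tg u g, ← hrange]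
        exact hdist
    · rintro ⟨g, ⟨hv, hkg, hdg⟩, rfl⟩
      refine ⟨?_, ?_, ?_⟩
      · rw [interval_eq_Tg, Tg_subset_iff]
        exact hv
      · obtain ⟨ψ⟩ := face_is_cube g
        rw [← hkg]
        exact ⟨ψ⟩
      · rw [dist_to_Tg]
        exact hdg
  -- step 2: ncard to Finset.card
  have hncard : ∀ k d : ℕ,
      Set.ncard {T : Set (Fin n → Bool) |
          T ⊆ interval (Qcube n) (fun _ => false) b ∧
          Nonempty ((Qcube n).induce T ≃g Qcube k) ∧
          sInf ((Qcube n).dist u '' T) = d} =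
      ((Finset.univ.filter (fun g => valid g)).filter
        (fun g => (kf g, df g) = (k, d))).card := by
    intro k d
    rw [hsets k d, Set.ncard_image_of_injective _ Tg_injective]
    rw [Set.ncard_eq_toFinset_card']
    congr 1
    ext g
    simp [Finset.filter_filter, Prod.ext_iff, and_assoc]
  -- step 3: rewrite each summand as a sum over g
  have hterm : ∀ k d : ℕ,
      ((((Finset.univ.filter (fun g => valid g)).filter
        (fun g => (kf g, df g) = (k, d))).card : ℝ)) * x ^ k * (-x) ^ d =
      ∑ g ∈ (Finset.univ.filter (fun g => valid g)).filter
        (fun g => (kf g, df g) = (k, d)), x ^ (kf g) * (-x) ^ (df g) := by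
    intro k d
    rw [Finset.sum_congr rfl (fun g hg => by
      simp only [Finset.mem_filter, Prod.mk.injEq] at hg
      rw [hg.2.1, hg.2.2])]
    rw [Finset.sum_const, nsmul_eq_mul]
    ring
  calc ∑ k ∈ R, ∑ d ∈ R,
      (Set.ncard {T : Set (Fin n → Bool) |
          T ⊆ interval (Qcube n) (fun _ => false) b ∧
          Nonempty ((Qcube n).induce T ≃g Qcube k) ∧
          sInf ((Qcube n).dist u '' T) = d} : ℝ) * x ^ k * (-x) ^ d
      = ∑ p ∈ R ×ˢ R, ∑ g ∈ (Finset.univ.filter (fun g => valid g)).filter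
          (fun g => (kf g, df g) = p), x ^ (kf g) * (-x) ^ (df g) := by
        rw [Finset.sum_product]
        exact Finset.sum_congr rfl fun k _ => Finset.sum_congr rfl fun d _ => by
          rw [hncard k d, hterm k d]
    _ = ∑ g ∈ Finset.univ.filter (fun g => valid g), x ^ (kf g) * (-x) ^ (df g) := by
        apply Finset.sum_fiberwise_of_maps_to
        intro g hg
        rw [Finset.mem_product, hR, Finset.mem_range, Finset.mem_range]
        constructor
        · have h1 : kf g ≤ n := by
            calc kf g ≤ (Finset.univ : Finset (Fin n)).card := Finset.card_filter_le _ _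
            _ = n := by simp
          have := Nat.lt_two_pow_self (n := n)
          omega
        · have h1 : df g ≤ n := by
            rw [hdf]
            calc ∑ i, pen u g i ≤ ∑ _i : Fin n, 1 := Finset.sum_le_sum (fun i _ => by
              unfold pen; match hgi : g i with
              | none => simp
              | some c => simp only []; split <;> omega)
            _ = n := by simp
          have := Nat.lt_two_pow_self (n := n)
          omega
    _ = (-x) ^ sInf ((Qcube n).dist u '' interval (Qcube n) (fun _ => false) b) := by
        rw [interval_eq_Tg, dist_to_Tg]
        set loc : Fin n → Option Bool → ℝ := fun i o =>
          match o with
          | none => x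
          | some c => if u i = c then 1 else -x
          with hloc
        have hprod : ∀ g : Fin n → Option Bool,
            x ^ (kf g) * (-x) ^ (df g) = ∏ i, loc i (g i) := by
          intro g
          rw [← Finset.prod_filter_mul_prod_filter_not Finset.univ (fun i => g i = none)
            (fun i => loc i (g i))]
          have h1 : ∏ i ∈ Finset.univ.filter (fun i => g i = none), loc i (g i) = x ^ kf g := by
            calc ∏ i ∈ Finset.univ.filter (fun i => g i = none), loc i (g i)
                = ∏ _i ∈ Finset.univ.filter (fun i => g i = none), x :=
                  Finset.prod_congr rfl (fun i hi => by
                    rw [Finset.mem_filter] at hi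
                    rw [hi.2, hloc])
              _ = x ^ kf g := by rw [Finset.prod_const]
          have h2 : ∏ i ∈ Finset.univ.filter (fun i => ¬ g i = none), loc i (g i)
              = (-x) ^ df g := by
            calc ∏ i ∈ Finset.univ.filter (fun i => ¬ g i = none), loc i (g i)
                = ∏ i ∈ Finset.univ.filter (fun i => ¬ g i = none), (-x) ^ (pen u g i) :=
                  Finset.prod_congr rfl (fun i hi => by
                    rw [Finset.mem_filter] at hi
                    match hgi : g i with
                    | none => exact absurd hgi hi.2
                    | some c =>
                      simp only [hloc, pen, hgi]
                      split <;> simp)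
              _ = (-x) ^ ∑ i ∈ Finset.univ.filter (fun i => ¬ g i = none), pen u g i :=
                  Finset.prod_pow_eq_pow_sum _ _ _
              _ = (-x) ^ df g := by
                  congr 1
                  rw [hdf]
                  simp only []
                  rw [← Finset.sum_filter_add_sum_filter_not Finset.univ (fun i => g i = none)
                    (fun i => pen u g i)]
                  have hz : ∑ i ∈ Finset.univ.filter (fun i => g i = none), pen u g i = 0 := by
                    apply Finset.sum_eq_zero
                    intro i hi
                    rw [Finset.mem_filter] at hi
                    unfold pen
                    rw [hi.2]
                  omega
          rw [h1, h2]
        rw [Finset.sum_congr rfl (fun g _ => hprod g)]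
        set opts : Fin n → Finset (Option Bool) := fun i =>
          if b i then Finset.univ else {some false} with hopts
        have hset : Finset.univ.filter (fun g => valid g) = Fintype.piFinset opts := by
          ext g
          rw [Finset.mem_filter, Fintype.mem_piFinset]
          simp only [hopts, hvalid, Finset.mem_univ, true_and]
          constructor
          · intro hv i
            by_cases hb : b i = true
            · rw [if_pos hb]; exact Finset.mem_univ _
            · rw [if_neg hb, Finset.mem_singleton]
              exact hv i (by simpa using hb)
          · intro hv i hb
            have := hv i
            rw [if_neg (by simp [hb])] at this
            simpa using this
        rw [hset, ← Finset.prod_univ_sum]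
        have hfact : ∀ i : Fin n, ∑ o ∈ opts i, loc i o =
            (-x) ^ (pen u (fun j => if b j then none else some false) i) := by
          intro i
          by_cases hb : b i = true
          · rw [show opts i = Finset.univ by rw [hopts]; simp [hb]]
            rw [show pen u (fun j => if b j then none else some false) i = 0 by
              simp [pen, hb]]
            rw [show (Finset.univ : Finset (Option Bool)) = {none, some false, some true} by
              decide]
            rw [Finset.sum_insert (by decide), Finset.sum_insert (by decide),
              Finset.sum_singleton, pow_zero]
            simp only [hloc]
            cases hu : u i <;> simp
          · have hb' : b i = false := by simpa using hb
            rw [show opts i = {some false} by rw [hopts]; simp [hb']]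
            rw [Finset.sum_singleton]
            rw [show pen u (fun j => if b j then none else some false) i =
                (if u i = false then 0 else 1) by simp [pen, hb']]
            simp only [hloc]
            cases hu : u i <;> simp [hu]
        calc ∏ i, ∑ o ∈ opts i, loc i o
            = ∏ i, (-x) ^ (pen u (fun j => if b j then none else some false) i) :=
              Finset.prod_congr rfl fun i _ => hfact i
          _ = (-x) ^ ∑ i, pen u (fun j => if b j then none else some false) i :=
              Finset.prod_pow_eq_pow_sum _ _ _
end
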